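/- arXiv:math/9807026 — 3 statements merged into one kernel-verified Lean document; each statement's English description precedes it below -/
import Mathlib

section
/- Let A, B be real n×n matrices satisfying: (c1) A is entrywise nonnegative, (c2) B_{ij} ≤ A_{ij} for all i ≠ j, and (c3) there exists an entrywise positive vector u with (B−A)u entrywise positive. Set μ = ρ((B−A)⁻¹A), ρ(A,B) = μ/(1+μ), and let Γ = G(A) ∪ G(B) if ρ(A,B) ≠ 0 and Γ = G(A) if ρ(A,B) = 0. Let J be a class of Γ such that (i) the principal submatrix (ρ(A,B)B − A)_J is singular, and (ii) whenever a class K ≠ J of Γ has access to J in the reduced graph of Γ, the principal submatrix (ρ(A,B)B − A)_K is nonsingular. Then there exists an entrywise nonnegative vector x in the nullspace of ρ(A,B)B − A whose entry x_j is positive exactly when vertex j has access in Γ to some vertex of J (and x_j = 0 otherwise); moreover, any entrywise nonnegative vector in the nullspace of ρ(A,B)B − A with exactly this support is a positive scalar multiple of x. -/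
open Matrix

/-- Spectral radius of a real matrix: supremum of the absolute values of its
complex eigenvalues. -/
noncomputable def specRad {m : Type*} [Fintype m] [DecidableEq m] (M : Matrix m m ℝ) : ℝ :=
  sSup ((fun z : ℂ => ‖z‖) '' spectrum ℂ (M.map (algebraMap ℝ ℂ)))

/-- Principal submatrix of `A` with rows and columns indexed by `J`. -/
def subm {n : ℕ} (A : Matrix (Fin n) (Fin n) ℝ) (J : Finset (Fin n)) :
    Matrix {i // i ∈ J} {i // i ∈ J} ℝ :=
  A.submatrix Subtype.val Subtype.val

/-- `X` is an M-matrix: `X = q•I − P` with `P ≥ 0` and `q ≥ ρ(P)`. -/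
def IsMMatrix {m : Type*} [Fintype m] [DecidableEq m] (X : Matrix m m ℝ) : Prop :=
  ∃ q : ℝ, ∃ P : Matrix m m ℝ, (∀ i j, 0 ≤ P i j) ∧ X = q • 1 - P ∧ specRad P ≤ q

/-- `X` is a nonsingular M-matrix: `X = q•I − P` with `P ≥ 0` and `q > ρ(P)`. -/
def IsNonsingMMatrix {m : Type*} [Fintype m] [DecidableEq m] (X : Matrix m m ℝ) : Prop :=
  ∃ q : ℝ, ∃ P : Matrix m m ℝ, (∀ i j, 0 ≤ P i j) ∧ X = q • 1 - P ∧ specRad P < q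

/-- Edge relation of the digraph `G(X)` of a matrix `X`: edge `(j,k)` iff
`X_{jk} ≠ 0`. -/
def edgeRel {n : ℕ} (X : Matrix (Fin n) (Fin n) ℝ) (j k : Fin n) : Prop :=
  X j k ≠ 0

/-- `j` has access to `k` in the digraph with edge relation `Γ`:
`j = k` or there is a directed path from `j` to `k`. -/
def Access {n : ℕ} (Γ : Fin n → Fin n → Prop) (j k : Fin n) : Prop :=
  Relation.ReflTransGen Γ j k

/-- `j` and `k` communicate: each has access to the other. -/
def Communicate {n : ℕ} (Γ : Fin n → Fin n → Prop) (j k : Fin n) : Prop :=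
  Access Γ j k ∧ Access Γ k j

/-- `C` is a class of the digraph with edge relation `Γ`: an equivalence class
of the communication relation. -/
def IsClass {n : ℕ} (Γ : Fin n → Fin n → Prop) (C : Finset (Fin n)) : Prop :=
  ∃ v : Fin n, ∀ w, w ∈ C ↔ Communicate Γ v w


set_option linter.unusedSectionVars false
set_option linter.unusedVariables false
set_option maxHeartbeats 4000000

section ZLemmas
variable {m : Type*} [Fintype m] [DecidableEq m]

lemma mulVec_apply' (M : Matrix m m ℝ) (v : m → ℝ) (i : m) :
    (M *ᵥ v) i = ∑ j, M i j * v j := rfl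

/-- Z-matrix with strict certificate: any supersolution is nonnegative. -/
lemma cert_nonneg (M : Matrix m m ℝ) (hZ : ∀ i j, i ≠ j → M i j ≤ 0)
    (w : m → ℝ) (hw : ∀ i, 0 < w i) (hMw : ∀ i, 0 < (M *ᵥ w) i)
    (z : m → ℝ) (hz : ∀ i, 0 ≤ (M *ᵥ z) i) : ∀ i, 0 ≤ z i := by
  by_contra hcon
  push_neg at hcon
  obtain ⟨i1, hi1⟩ := hcon
  have hne : (Finset.univ : Finset m).Nonempty := ⟨i1, Finset.mem_univ _⟩
  obtain ⟨i0, -, hi0⟩ := Finset.exists_max_image Finset.univ (fun i => (-z i) / w i) hne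
  set t := (-z i0) / w i0 with ht
  have htpos : 0 < t := lt_of_lt_of_le (div_pos (by linarith) (hw i1)) (hi0 i1 (Finset.mem_univ _))
  set v : m → ℝ := fun i => z i + t * w i with hv
  have hv0 : ∀ i, 0 ≤ v i := by
    intro i
    have := hi0 i (Finset.mem_univ _)
    have : -z i ≤ t * w i := by
      rw [div_le_iff₀ (hw i)] at this
      linarith [this]
    simp only [hv]; linarith
  have hvi0 : v i0 = 0 := by
    simp only [hv, ht]
    rw [div_mul_cancel₀ _ (ne_of_gt (hw i0))]
    ring
  have h1 : (M *ᵥ v) i0 = (M *ᵥ z) i0 + t * (M *ᵥ w) i0 := by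
    simp only [mulVec_apply']
    rw [Finset.mul_sum, ← Finset.sum_add_distrib]
    congr 1; ext j; simp only [hv]; ring
  have h2 : 0 < (M *ᵥ v) i0 := by
    rw [h1]
    have := hz i0
    have := hMw i0
    nlinarith
  have h3 : (M *ᵥ v) i0 ≤ 0 := by
    rw [mulVec_apply']
    apply Finset.sum_nonpos
    intro j _
    rcases eq_or_ne j i0 with rfl | hj
    · rw [hvi0]; simp
    · exact mul_nonpos_of_nonpos_of_nonneg (hZ i0 j (Ne.symm hj)) (hv0 j)
  linarith

lemma cert_inj (M : Matrix m m ℝ) (hZ : ∀ i j, i ≠ j → M i j ≤ 0)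
    (w : m → ℝ) (hw : ∀ i, 0 < w i) (hMw : ∀ i, 0 < (M *ᵥ w) i)
    (z : m → ℝ) (hz : M *ᵥ z = 0) : z = 0 := by
  have h1 := cert_nonneg M hZ w hw hMw z (by rw [hz]; intro i; simp)
  have h2 := cert_nonneg M hZ w hw hMw (-z) (by rw [Matrix.mulVec_neg, hz]; intro i; simp)
  funext i
  have ha := h1 i
  have hb := h2 i
  simp only [Pi.neg_apply] at hb
  simp only [Pi.zero_apply]
  linarith

lemma cert_det (M : Matrix m m ℝ) (hZ : ∀ i j, i ≠ j → M i j ≤ 0)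
    (w : m → ℝ) (hw : ∀ i, 0 < w i) (hMw : ∀ i, 0 < (M *ᵥ w) i) :
    IsUnit M.det := by
  rw [isUnit_iff_ne_zero]
  intro hdet
  obtain ⟨v, hvne, hv⟩ := (Matrix.exists_mulVec_eq_zero_iff).mpr hdet
  exact hvne (cert_inj M hZ w hw hMw v hv)

lemma cert_inv_nonneg (M : Matrix m m ℝ) (hZ : ∀ i j, i ≠ j → M i j ≤ 0)
    (w : m → ℝ) (hw : ∀ i, 0 < w i) (hMw : ∀ i, 0 < (M *ᵥ w) i) :
    ∀ i j, 0 ≤ M⁻¹ i j := by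
  intro i j
  have hdet := cert_det M hZ w hw hMw
  set z : m → ℝ := M⁻¹ *ᵥ Pi.single j 1 with hzdef
  have hz : M *ᵥ z = Pi.single j 1 := by
    rw [hzdef, Matrix.mulVec_mulVec, Matrix.mul_nonsing_inv M hdet, Matrix.one_mulVec]
  have h := cert_nonneg M hZ w hw hMw z (by
    rw [hz]; intro i
    rcases eq_or_ne i j with rfl | hij
    · simp
    · simp [Pi.single_apply, hij])
  have hzi : z i = M⁻¹ i j := by
    simp [hzdef, mulVec_apply', Pi.single_apply, Finset.sum_ite_eq]
  rw [← hzi]; exact h i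
end ZLemmas

section ZLemmas2
variable {m : Type*} [Fintype m] [DecidableEq m]

lemma mulVec_apply'' (M : Matrix m m ℝ) (v : m → ℝ) (i : m) :
    (M *ᵥ v) i = ∑ j, M i j * v j := rfl

/-- Zero set of a nonnegative supersolution propagates along edges. -/
lemma zero_propagate (M : Matrix m m ℝ) (hZ : ∀ i j, i ≠ j → M i j ≤ 0)
    (z : m → ℝ) (hz0 : ∀ i, 0 ≤ z i) (hMz : ∀ i, 0 ≤ (M *ᵥ z) i) :
    ∀ a b : m, Relation.ReflTransGen (fun p q => p ≠ q ∧ M p q ≠ 0) a b →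
      z a = 0 → z b = 0 := by
  intro a b hab
  induction hab with
  | refl => exact fun h => h
  | tail hpath hedge ih =>
    rename_i b' c
    intro ha
    have hb' : z b' = 0 := ih ha
    have hsum : ∑ j, M b' j * z j = 0 := by
      have h1 : 0 ≤ ∑ j, M b' j * z j := hMz b'
      have h2 : ∑ j, M b' j * z j ≤ 0 := by
        apply Finset.sum_nonpos
        intro j _
        rcases eq_or_ne j b' with rfl | hj
        · rw [hb']; simp
        · exact mul_nonpos_of_nonpos_of_nonneg (hZ b' j (Ne.symm hj)) (hz0 j)
      linarith
    have hterm : M b' c * z c = 0 := by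
      have := (Finset.sum_eq_zero_iff_of_nonpos (fun j _ => by
        rcases eq_or_ne j b' with rfl | hj
        · rw [hb']; simp
        · exact mul_nonpos_of_nonpos_of_nonneg (hZ b' j (Ne.symm hj)) (hz0 j))).mp hsum
      exact this c (Finset.mem_univ _)
    rcases mul_eq_zero.mp hterm with h | h
    · exact absurd h hedge.2
    · exact h

/-- Irreducible upgrade: nonneg nonzero supersolution is strictly positive. -/
lemma irred_pos (M : Matrix m m ℝ) (hZ : ∀ i j, i ≠ j → M i j ≤ 0)
    (hirr : ∀ i j : m, Relation.ReflTransGen (fun p q => p ≠ q ∧ M p q ≠ 0) i j)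
    (z : m → ℝ) (hz0 : ∀ i, 0 ≤ z i) (hzne : z ≠ 0) (hMz : ∀ i, 0 ≤ (M *ᵥ z) i) :
    ∀ i, 0 < z i := by
  obtain ⟨j0, hj0⟩ := Function.ne_iff.mp hzne
  intro i
  rcases lt_or_eq_of_le (hz0 i) with h | h
  · exact h
  · exfalso
    exact hj0 (by simpa using zero_propagate M hZ z hz0 hMz i j0 (hirr i j0) h.symm)

/-- Nonsingular irreducible Z-matrix with certificate: solutions of `Mz = e ⪈ 0`
are strictly positive. -/
lemma irred_solution_pos (M : Matrix m m ℝ) (hZ : ∀ i j, i ≠ j → M i j ≤ 0)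
    (hirr : ∀ i j : m, Relation.ReflTransGen (fun p q => p ≠ q ∧ M p q ≠ 0) i j)
    (w : m → ℝ) (hw : ∀ i, 0 < w i) (hMw : ∀ i, 0 ≤ (M *ᵥ w) i)
    (hdet : IsUnit M.det)
    (e : m → ℝ) (he : ∀ i, 0 ≤ e i) (hene : e ≠ 0)
    (z : m → ℝ) (hz : M *ᵥ z = e) : ∀ i, 0 < z i := by
  have hznn : ∀ i, 0 ≤ z i := by
    by_contra hcon
    push_neg at hcon
    obtain ⟨i1, hi1⟩ := hcon
    have hne : (Finset.univ : Finset m).Nonempty := ⟨i1, Finset.mem_univ _⟩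
    obtain ⟨i0, -, hi0⟩ := Finset.exists_max_image Finset.univ (fun i => (-z i) / w i) hne
    set t := (-z i0) / w i0 with ht
    have htpos : 0 < t :=
      lt_of_lt_of_le (div_pos (by linarith) (hw i1)) (hi0 i1 (Finset.mem_univ _))
    set v : m → ℝ := fun i => z i + t * w i with hv
    have hv0 : ∀ i, 0 ≤ v i := by
      intro i
      have h2 := hi0 i (Finset.mem_univ _)
      rw [div_le_iff₀ (hw i)] at h2
      simp only [hv]; linarith
    have hvi0 : v i0 = 0 := by
      simp only [hv, ht]
      rw [div_mul_cancel₀ _ (ne_of_gt (hw i0))]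
      ring
    have hMv : ∀ i, 0 ≤ (M *ᵥ v) i := by
      intro i
      have h1 : (M *ᵥ v) i = (M *ᵥ z) i + t * (M *ᵥ w) i := by
        simp only [mulVec_apply'']
        rw [Finset.mul_sum, ← Finset.sum_add_distrib]
        congr 1; ext j; simp only [hv]; ring
      rw [h1, hz]
      have := he i; have := hMw i
      nlinarith
    have hvne : v ≠ 0 := by
      intro hveq
      have hzeq : z = fun i => -(t * w i) := by
        funext i
        have : v i = 0 := by rw [hveq]; rfl
        simp only [hv] at this; linarith
      have : e = M *ᵥ z := hz.symm
      rw [hzeq] at this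
      have heneg : ∀ i, e i ≤ 0 := by
        intro i
        rw [this]
        have hrw : (fun i => -(t * w i)) = -(t • w) := by funext i; simp
        rw [hrw, Matrix.mulVec_neg, Matrix.mulVec_smul]
        simp only [Pi.neg_apply, Pi.smul_apply, smul_eq_mul]
        have := hMw i
        nlinarith
      apply hene
      funext i
      exact le_antisymm (heneg i) (he i)
    have := irred_pos M hZ hirr v hv0 hvne hMv i0
    rw [hvi0] at this
    exact lt_irrefl _ this
  have hzne : z ≠ 0 := by
    intro hzeq
    apply hene
    rw [← hz, hzeq, Matrix.mulVec_zero]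
  exact irred_pos M hZ hirr z hznn hzne (by rw [hz]; exact he)

/-- Singular irreducible Z-matrix with certificate: the certificate is null. -/
lemma irred_cert_null (M : Matrix m m ℝ) (hZ : ∀ i j, i ≠ j → M i j ≤ 0)
    (hirr : ∀ i j : m, Relation.ReflTransGen (fun p q => p ≠ q ∧ M p q ≠ 0) i j)
    (w : m → ℝ) (hw : ∀ i, 0 < w i) (hMw : ∀ i, 0 ≤ (M *ᵥ w) i)
    (z : m → ℝ) (hzne : z ≠ 0) (hz : M *ᵥ z = 0) : M *ᵥ w = 0 := by
  -- wlog some coordinate of z is positive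
  have key : ∀ z : m → ℝ, z ≠ 0 → M *ᵥ z = 0 → (∃ i, 0 < z i) → M *ᵥ w = 0 := by
    intro z hzne hz ⟨i1, hi1⟩
    have hne : (Finset.univ : Finset m).Nonempty := ⟨i1, Finset.mem_univ _⟩
    obtain ⟨i0, -, hi0⟩ := Finset.exists_max_image Finset.univ (fun i => z i / w i) hne
    set t := z i0 / w i0 with ht
    have htpos : 0 < t :=
      lt_of_lt_of_le (div_pos hi1 (hw i1)) (hi0 i1 (Finset.mem_univ _))
    set v : m → ℝ := fun i => t * w i - z i with hv
    have hv0 : ∀ i, 0 ≤ v i := by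
      intro i
      have h2 := hi0 i (Finset.mem_univ _)
      rw [div_le_iff₀ (hw i)] at h2
      simp only [hv]; linarith
    have hvi0 : v i0 = 0 := by
      simp only [hv, ht]
      rw [div_mul_cancel₀ _ (ne_of_gt (hw i0))]
      ring
    have hMv : ∀ i, 0 ≤ (M *ᵥ v) i := by
      intro i
      have h1 : (M *ᵥ v) i = t * (M *ᵥ w) i - (M *ᵥ z) i := by
        simp only [mulVec_apply'']
        rw [Finset.mul_sum, ← Finset.sum_sub_distrib]
        congr 1; ext j; simp only [hv]; ring
      rw [h1, hz]
      have := hMw i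
      simp only [Pi.zero_apply]
      nlinarith
    have hveq : v = 0 := by
      by_contra hvne
      have := irred_pos M hZ hirr v hv0 hvne hMv i0
      rw [hvi0] at this
      exact lt_irrefl _ this
    have hzw : z = fun i => t * w i := by
      funext i
      have : v i = 0 := by rw [hveq]; rfl
      simp only [hv] at this; linarith
    have : M *ᵥ (fun i => t * w i) = 0 := by rw [← hzw]; exact hz
    funext i
    have h2 : (M *ᵥ (fun i => t * w i)) i = t * (M *ᵥ w) i := by
      simp only [mulVec_apply'']
      rw [Finset.mul_sum]
      congr 1; ext j; ring
    have h3 : t * (M *ᵥ w) i = 0 := by rw [← h2, this]; rfl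
    have := mul_eq_zero.mp h3
    simp only [Pi.zero_apply]
    rcases this with h | h
    · exact absurd h (ne_of_gt htpos)
    · exact h
  rcases Classical.em (∃ i, 0 < z i) with h | h
  · exact key z hzne hz h
  · push_neg at h
    obtain ⟨j0, hj0⟩ := Function.ne_iff.mp hzne
    have hneg : (-z) ≠ 0 := fun hc => by
      have := congrFun hc j0
      simp only [Pi.neg_apply, Pi.zero_apply, neg_eq_zero] at this
      exact hj0 (by simpa using this)
    apply key (-z) hneg (by rw [Matrix.mulVec_neg, hz]; simp)
    refine ⟨j0, ?_⟩
    have : z j0 < 0 := lt_of_le_of_ne (h j0) hj0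
    simpa using neg_pos.mpr this

/-- In a finite set, a preorder has a "source-type" extremal element. -/
lemma exists_extremal {α : Type*} [DecidableEq α] (r : α → α → Prop)
    (hrefl : ∀ a, r a a) (htrans : ∀ a b c, r a b → r b c → r a c)
    (U : Finset α) (hU : U.Nonempty) :
    ∃ v ∈ U, ∀ w ∈ U, r w v → r v w := by
  classical
  obtain ⟨v, hv, hmin⟩ := Finset.exists_min_image U (fun v => (U.filter (fun w => r w v)).card) hU
  refine ⟨v, hv, fun w hw hwv => ?_⟩
  by_contra hvw
  have hsub : U.filter (fun z => r z w) ⊂ U.filter (fun z => r z v) := by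
    constructor
    · intro z hz
      simp only [Finset.mem_filter] at hz ⊢
      exact ⟨hz.1, htrans z w v hz.2 hwv⟩
    · intro hcon
      have : v ∈ U.filter (fun z => r z w) := hcon (by
        simp only [Finset.mem_filter]; exact ⟨hv, hrefl v⟩)
      simp only [Finset.mem_filter] at this
      exact hvw this.2
  have := Finset.card_lt_card hsub
  have := hmin w hw
  omega
end ZLemmas2

section Analytic
variable {n : ℕ}

lemma specRad_nonneg (M : Matrix (Fin n) (Fin n) ℝ) : 0 ≤ specRad M := by
  apply Real.sSup_nonneg
  rintro x ⟨z, -, rfl⟩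
  exact norm_nonneg z

/-- If `μ < t` then `t • 1 − N` is nonsingular, where `μ = specRad N`. -/
lemma det_smul_one_sub_ne_zero (N : Matrix (Fin n) (Fin n) ℝ) (t : ℝ)
    (ht0 : 0 ≤ t) (ht : specRad N < t) : (t • (1 : Matrix (Fin n) (Fin n) ℝ) - N).det ≠ 0 := by
  intro hdet
  set N' := N.map (algebraMap ℝ ℂ) with hN'
  have hmap : (t • (1 : Matrix (Fin n) (Fin n) ℝ) - N).map (algebraMap ℝ ℂ)
      = (t : ℂ) • (1 : Matrix (Fin n) (Fin n) ℂ) - N' := by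
    ext i j
    simp [hN', Matrix.map_apply, Matrix.one_apply, apply_ite, Matrix.sub_apply]
  have hdetC : ((t : ℂ) • (1 : Matrix (Fin n) (Fin n) ℂ) - N').det = 0 := by
    rw [← hmap]
    have : ((t • (1 : Matrix (Fin n) (Fin n) ℝ) - N).map (algebraMap ℝ ℂ)).det
        = algebraMap ℝ ℂ ((t • (1 : Matrix (Fin n) (Fin n) ℝ) - N).det) :=
      (RingHom.map_det (algebraMap ℝ ℂ) _).symm
    rw [this, hdet, map_zero]
  have hnotunit : ¬ IsUnit ((t : ℂ) • (1 : Matrix (Fin n) (Fin n) ℂ) - N') := by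
    rw [Matrix.isUnit_iff_isUnit_det, hdetC]
    exact fun h => by simpa using h.ne_zero
  have hmem : (t : ℂ) ∈ spectrum ℂ N' := by
    rw [spectrum.mem_iff]
    convert hnotunit using 2
    rw [Algebra.algebraMap_eq_smul_one]
  have hbdd : BddAbove ((fun z : ℂ => ‖z‖) '' spectrum ℂ N') :=
    ((Matrix.finite_spectrum N').image _).bddAbove
  have hle : ‖(t : ℂ)‖ ≤ specRad N :=
    le_csSup hbdd ⟨(t : ℂ), hmem, rfl⟩
  rw [Complex.norm_real, Real.norm_eq_abs, abs_of_nonneg ht0] at hle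
  linarith

/-- Factorization `s•B − A = (1−s) • ((B−A) * (m•1 − N))` with `m = s/(1−s)`. -/
lemma factorizationAux (A B : Matrix (Fin n) (Fin n) ℝ) (hBA : IsUnit (B - A).det)
    (s : ℝ) (hs : s < 1) :
    s • B - A = (1 - s) • ((B - A) * ((s / (1 - s)) • (1 : Matrix (Fin n) (Fin n) ℝ)
      - (B - A)⁻¹ * A)) := by
  have h1s : (1 : ℝ) - s ≠ 0 := by linarith
  have hmul : (B - A) * ((B - A)⁻¹ * A) = A := by
    rw [← Matrix.mul_assoc, Matrix.mul_nonsing_inv _ hBA, Matrix.one_mul]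
  rw [Matrix.mul_sub, hmul, Matrix.mul_smul, Matrix.mul_one, smul_sub, smul_smul]
  rw [mul_div_cancel₀ _ h1s]  -- (1-s) * (s/(1-s)) = s
  rw [smul_sub]
  ring_nf
  module
end Analytic

section Analytic2
variable {n : ℕ} (A B : Matrix (Fin n) (Fin n) ℝ)

/-- `s•B − A` is nonsingular for `ρ < s ≤ 1`. -/
lemma detCs (hBA : IsUnit (B - A).det) (μ : ℝ) (hμ : μ = specRad ((B - A)⁻¹ * A))
    (hμ0 : 0 ≤ μ) (s : ℝ) (hs1 : μ / (1 + μ) < s) (hs2 : s ≤ 1) :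
    IsUnit (s • B - A).det := by
  rcases eq_or_lt_of_le hs2 with rfl | hs2'
  · simpa using hBA
  · have h1s : (0:ℝ) < 1 - s := by linarith
    have hμs : μ < s / (1 - s) := by
      rw [lt_div_iff₀ h1s]
      rw [div_lt_iff₀ (by linarith : (0:ℝ) < 1 + μ)] at hs1
      nlinarith
    have hsp : 0 ≤ s / (1 - s) := by
      have : 0 ≤ s := le_trans (div_nonneg hμ0 (by linarith)) hs1.le
      positivity
    have hdet2 : ((s / (1 - s)) • (1 : Matrix (Fin n) (Fin n) ℝ) - (B - A)⁻¹ * A).det ≠ 0 :=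
      det_smul_one_sub_ne_zero _ _ hsp (hμ ▸ hμs)
    rw [factorizationAux A B hBA s hs2', isUnit_iff_ne_zero, Matrix.det_smul, Matrix.det_mul]
    exact mul_ne_zero (pow_ne_zero _ (ne_of_gt h1s))
      (mul_ne_zero (isUnit_iff_ne_zero.mp hBA) hdet2)

/-- positivity of the canonical certificate `M⁻¹ 1` for inverse-nonneg nonsingular `M`. -/
lemma inv_one_pos {m : Type*} [Fintype m] [DecidableEq m] (M : Matrix m m ℝ)
    (hdet : IsUnit M.det) (hinv : ∀ i j, 0 ≤ M⁻¹ i j) :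
    (∀ i, 0 < (M⁻¹ *ᵥ fun _ => 1) i) ∧ M *ᵥ (M⁻¹ *ᵥ fun _ => 1) = fun _ => 1 := by
  constructor
  · intro i
    have hnn : 0 ≤ (M⁻¹ *ᵥ fun _ => 1) i :=
      Finset.sum_nonneg fun j _ => by simpa using hinv i j
    rcases eq_or_lt_of_le hnn with heq | h
    · exfalso
      have hrow : ∀ j, M⁻¹ i j = 0 := by
        have := (Finset.sum_eq_zero_iff_of_nonneg
          (fun j (_ : j ∈ Finset.univ) => by simpa using hinv i j)).mp heq.symm
        intro j
        simpa using this j (Finset.mem_univ j)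
      have h1 : (M⁻¹ * M) i i = 1 := by
        rw [Matrix.nonsing_inv_mul M hdet, Matrix.one_apply_eq]
      rw [Matrix.mul_apply] at h1
      simp only [hrow, zero_mul, Finset.sum_const_zero] at h1
      exact one_ne_zero h1.symm
    · exact h
  · rw [Matrix.mulVec_mulVec, Matrix.mul_nonsing_inv M hdet, Matrix.one_mulVec]

/-- The inverse of `s•B − A` is entrywise nonnegative on `(ρ, 1]`. -/
lemma inv_nonneg_on (hBA : IsUnit (B - A).det) (μ : ℝ)
    (hμ : μ = specRad ((B - A)⁻¹ * A)) (hμ0 : 0 ≤ μ)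
    (hZ : ∀ s : ℝ, 0 ≤ s → s ≤ 1 → ∀ i j, i ≠ j → (s • B - A) i j ≤ 0)
    (u : Fin n → ℝ) (hu : ∀ i, 0 < u i) (hu2 : ∀ i, 0 < ((B - A) *ᵥ u) i)
    (s0 : ℝ) (hs0 : μ / (1 + μ) < s0) (hs01 : s0 ≤ 1) :
    ∀ i j, 0 ≤ (s0 • B - A)⁻¹ i j := by
  set ρ : ℝ := μ / (1 + μ) with hρdef
  have hρ0 : 0 ≤ ρ := div_nonneg hμ0 (by linarith)
  -- the set E
  set E : Set ℝ := {s | s ∈ Set.Icc s0 1 ∧ ∀ i j, 0 ≤ (s • B - A)⁻¹ i j} with hE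
  have hone : (1:ℝ) ∈ E := by
    refine ⟨⟨hs01, le_refl 1⟩, ?_⟩
    intro i j
    have : (1:ℝ) • B - A = B - A := by rw [one_smul]
    rw [this]
    exact cert_inv_nonneg (B - A) (by
      intro i j hij
      have := hZ 1 zero_le_one le_rfl i j hij
      rwa [one_smul] at this) u hu hu2 i j
  have hclosed : IsClosed E := by
    have hcont : ContinuousOn (fun s : ℝ => (s • B - A)⁻¹) (Set.Icc s0 1) := by
      have h1 : Continuous fun s : ℝ => s • B - A := by
        apply Continuous.sub _ continuous_const
        exact continuous_id.smul continuous_const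
      have hdet : Continuous fun s : ℝ => (s • B - A).det := h1.matrix_det
      have hadj : Continuous fun s : ℝ => (s • B - A).adjugate := h1.matrix_adjugate
      have hdne : ∀ s ∈ Set.Icc s0 1, (s • B - A).det ≠ 0 := by
        intro s hs
        exact isUnit_iff_ne_zero.mp
          (detCs A B hBA μ hμ hμ0 s (lt_of_lt_of_le hs0 hs.1) hs.2)
      have : ContinuousOn (fun s : ℝ => ((s • B - A).det)⁻¹ • (s • B - A).adjugate)
          (Set.Icc s0 1) :=
        ContinuousOn.smul ((hdet.continuousOn).inv₀ hdne) hadj.continuousOn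
      refine this.congr ?_
      intro s hs
      show (s • B - A)⁻¹ = ((s • B - A).det)⁻¹ • (s • B - A).adjugate
      rw [Matrix.inv_def, Ring.inverse_eq_inv]
    have : E = Set.Icc s0 1 ∩ (fun s : ℝ => (s • B - A)⁻¹) ⁻¹'
        {M : Matrix (Fin n) (Fin n) ℝ | ∀ i j, 0 ≤ M i j} := by
      ext s
      constructor
      · rintro ⟨h1, h2⟩; exact ⟨h1, h2⟩
      · rintro ⟨h1, h2⟩; exact ⟨h1, h2⟩
    rw [this]
    apply hcont.preimage_isClosed_of_isClosed isClosed_Icc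
    have : {M : Matrix (Fin n) (Fin n) ℝ | ∀ i j, 0 ≤ M i j}
        = ⋂ i, ⋂ j, {M : Matrix (Fin n) (Fin n) ℝ | 0 ≤ M i j} := by
      ext M; simp
    rw [this]
    apply isClosed_iInter; intro i; apply isClosed_iInter; intro j
    exact isClosed_le continuous_const ((continuous_apply j).comp (continuous_apply i))
  -- sInf
  have hEne : E.Nonempty := ⟨1, hone⟩
  have hbdd : BddBelow E := ⟨s0, fun s hs => hs.1.1⟩
  set c := sInf E with hc
  have hcE : c ∈ E := hclosed.csInf_mem hEne hbdd
  have hcIcc : c ∈ Set.Icc s0 1 := hcE.1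
  -- openness: if s0 < c, derive contradiction
  rcases eq_or_lt_of_le hcIcc.1 with heq | hlt
  · intro i j; rw [heq]; exact hcE.2 i j
  · exfalso
    have hcdet : IsUnit (c • B - A).det :=
      detCs A B hBA μ hμ hμ0 c (lt_of_lt_of_le hs0 hcIcc.1) hcIcc.2
    obtain ⟨hwpos, hMw⟩ := inv_one_pos (c • B - A) hcdet hcE.2
    set w := (c • B - A)⁻¹ *ᵥ (fun _ => 1) with hwdef
    set R := ∑ i, |(B *ᵥ w) i| with hR
    have hRnn : 0 ≤ R := Finset.sum_nonneg fun i _ => abs_nonneg _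
    set δ := min (1 / (2 * (1 + R))) ((c - s0)/2) with hδ
    have hδpos : 0 < δ := by
      apply lt_min
      · positivity
      · linarith
    set s' := c - δ with hs'
    have hs'lt : s' < c := by simp [hs', hδpos]
    have hs's0 : s0 ≤ s' := by
      have : δ ≤ (c - s0)/2 := min_le_right _ _
      simp only [hs']; linarith
    have hs'1 : s' ≤ 1 := by
      have : s' < c := hs'lt
      linarith [hcIcc.2]
    have hs'nn : 0 ≤ s' := le_trans (le_trans hρ0 hs0.le) hs's0
    -- certificate at s'
    have hcert : ∀ i, 0 < ((s' • B - A) *ᵥ w) i := by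
      intro i
      have hsplit : (s' • B - A) *ᵥ w = (c • B - A) *ᵥ w + (s' - c) • (B *ᵥ w) := by
        have : s' • B - A = (c • B - A) + (s' - c) • B := by
          module
        rw [this, Matrix.add_mulVec, Matrix.smul_mulVec]
      rw [hsplit]
      simp only [Pi.add_apply, Pi.smul_apply, smul_eq_mul, hMw]
      have habs : |(s' - c) * (B *ᵥ w) i| < 1 := by
        rw [abs_mul]
        have h1 : |s' - c| ≤ δ := by
          rw [abs_sub_comm, abs_of_nonneg (by simp [hs', hδpos.le])]
          simp [hs']
        have h2 : |(B *ᵥ w) i| ≤ R := Finset.single_le_sum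
          (fun i (_ : i ∈ Finset.univ) => abs_nonneg ((B *ᵥ w) i)) (Finset.mem_univ i)
        have h3 : δ ≤ 1 / (2 * (1 + R)) := min_le_left _ _
        calc |s' - c| * |(B *ᵥ w) i| ≤ (1 / (2 * (1 + R))) * R := by
              apply mul_le_mul (le_trans h1 h3) h2 (abs_nonneg _) (by positivity)
          _ < 1 := by
              rw [div_mul_eq_mul_div, div_lt_one (by positivity)]
              nlinarith
      have := abs_lt.mp habs
      linarith [this.1]
    have hs'E : s' ∈ E := by
      refine ⟨⟨hs's0, hs'1⟩, ?_⟩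
      exact cert_inv_nonneg (s' • B - A) (fun i j hij => hZ s' hs'nn hs'1 i j hij) w hwpos hcert
    have : c ≤ s' := csInf_le hbdd hs'E
    linarith
end Analytic2

section ClassCert
variable {n : ℕ} (A B : Matrix (Fin n) (Fin n) ℝ)

lemma submVec_split (M : Matrix (Fin n) (Fin n) ℝ) (K : Finset (Fin n))
    (v : {i // i ∈ K} → ℝ) (i : {i // i ∈ K}) :
    (M.submatrix (fun i : {i // i ∈ K} => (i.val : Fin n)) (fun i : {i // i ∈ K} => (i.val : Fin n)) *ᵥ v) i = ∑ j : {i // i ∈ K}, M i.val j.val * v j := rfl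

lemma subm_linear (s : ℝ) (K : Finset (Fin n)) (v : {i // i ∈ K} → ℝ) (i : {i // i ∈ K}) :
    ((s • B - A).submatrix (fun i : {i // i ∈ K} => (i.val : Fin n)) (fun i : {i // i ∈ K} => (i.val : Fin n)) *ᵥ v) i
      = s * ((B.submatrix (fun i : {i // i ∈ K} => (i.val : Fin n)) (fun i : {i // i ∈ K} => (i.val : Fin n))) *ᵥ v) i
        - ((A.submatrix (fun i : {i // i ∈ K} => (i.val : Fin n)) (fun i : {i // i ∈ K} => (i.val : Fin n))) *ᵥ v) i := by
  simp only [submVec_split, Finset.mul_sum, ← Finset.sum_sub_distrib]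
  congr 1; ext j
  simp only [Matrix.submatrix_apply, Matrix.sub_apply, Matrix.smul_apply, smul_eq_mul]
  ring

/-- Certificate for every principal submatrix block: a nonneg nonzero `w` with
`(ρ•B−A)_K w ≥ 0`. -/
lemma class_cert (hBA : IsUnit (B - A).det) (μ : ℝ)
    (hμ : μ = specRad ((B - A)⁻¹ * A)) (hμ0 : 0 ≤ μ)
    (hZ : ∀ s : ℝ, 0 ≤ s → s ≤ 1 → ∀ i j, i ≠ j → (s • B - A) i j ≤ 0)
    (u : Fin n → ℝ) (hu : ∀ i, 0 < u i) (hu2 : ∀ i, 0 < ((B - A) *ᵥ u) i)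
    (K : Finset (Fin n)) (hK : K.Nonempty) :
    ∃ w : {i // i ∈ K} → ℝ, (∀ i, 0 ≤ w i) ∧ w ≠ 0 ∧
      ∀ i, 0 ≤ (((μ / (1 + μ)) • B - A).submatrix (fun i : {i // i ∈ K} => (i.val : Fin n)) (fun i : {i // i ∈ K} => (i.val : Fin n)) *ᵥ w) i := by
  classical
  haveI : Nonempty {i // i ∈ K} := ⟨⟨hK.choose, hK.choose_spec⟩⟩
  set ρ : ℝ := μ / (1 + μ) with hρdef
  have hρ0 : 0 ≤ ρ := div_nonneg hμ0 (by linarith)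
  have hρ1 : ρ < 1 := by
    rw [hρdef, div_lt_one (by linarith)]; linarith
  -- the sequence s k
  set s : ℕ → ℝ := fun k => ρ + (1 - ρ) / (k + 2) with hs
  have hsρ : ∀ k, ρ < s k := by
    intro k
    have hk2 : (0:ℝ) < (k:ℝ) + 2 := by positivity
    have : (0:ℝ) < (1 - ρ) / (k + 2) := div_pos (by linarith) hk2
    simp only [hs]; linarith
  have hs1 : ∀ k, s k ≤ 1 := by
    intro k
    have h2 : ((2:ℝ)) ≤ (k + 2 : ℝ) := by
      have : (0:ℝ) ≤ k := Nat.cast_nonneg k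
      linarith
    have : (1 - ρ) / (k + 2) ≤ (1 - ρ) / 2 :=
      div_le_div_of_nonneg_left (by linarith) (by norm_num) h2
    simp only [hs]; linarith
  have hstend : Filter.Tendsto s Filter.atTop (nhds ρ) := by
    have h1 : Filter.Tendsto (fun k : ℕ => ((k:ℝ) + 2)) Filter.atTop Filter.atTop :=
      Filter.tendsto_atTop_add_const_right _ 2 tendsto_natCast_atTop_atTop
    have h2 : Filter.Tendsto (fun k : ℕ => (1 - ρ) / ((k:ℝ) + 2)) Filter.atTop (nhds 0) :=
      Filter.Tendsto.div_atTop tendsto_const_nhds h1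
    have := Filter.Tendsto.const_add ρ h2
    simpa using this
  -- certificates along the sequence
  have hwk : ∀ k : ℕ, ∃ w : Fin n → ℝ, (∀ i, 0 < w i) ∧ (s k • B - A) *ᵥ w = fun _ => 1 := by
    intro k
    have hdet := detCs A B hBA μ hμ hμ0 (s k) (hsρ k) (hs1 k)
    have hinv := inv_nonneg_on A B hBA μ hμ hμ0 hZ u hu hu2 (s k) (hsρ k) (hs1 k)
    obtain ⟨h1, h2⟩ := inv_one_pos (s k • B - A) hdet hinv
    exact ⟨_, h1, h2⟩
  choose W hWpos hWone using hwk
  -- restrict and normalize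
  set ω : ℕ → {i // i ∈ K} → ℝ := fun k i => W k i.val with hω
  set σ : ℕ → ℝ := fun k => ∑ i : {i // i ∈ K}, ω k i with hσ
  have hσpos : ∀ k, 0 < σ k :=
    fun k => Finset.sum_pos (fun i _ => hWpos k i.val) Finset.univ_nonempty
  set v : ℕ → {i // i ∈ K} → ℝ := fun k => (σ k)⁻¹ • ω k with hv
  have hv0 : ∀ k i, 0 ≤ v k i := by
    intro k i
    simp only [hv, Pi.smul_apply, smul_eq_mul]
    exact mul_nonneg (inv_nonneg.mpr (hσpos k).le) (hWpos k i.val).le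
  have hv1 : ∀ k i, v k i ≤ 1 := by
    intro k i
    simp only [hv, Pi.smul_apply, smul_eq_mul]
    rw [inv_mul_le_one₀ (hσpos k)]
    · exact Finset.single_le_sum (fun j (_ : j ∈ Finset.univ) => (hWpos k j.val).le)
        (Finset.mem_univ i)
  have hvsum : ∀ k, ∑ i, v k i = 1 := by
    intro k
    simp only [hv, Pi.smul_apply, smul_eq_mul, ← Finset.mul_sum]
    exact inv_mul_cancel₀ (ne_of_gt (hσpos k))
  -- the key inequality along the sequence
  have hkey : ∀ k i, 0 ≤ ((s k • B - A).submatrix (fun i : {i // i ∈ K} => (i.val : Fin n)) (fun i : {i // i ∈ K} => (i.val : Fin n)) *ᵥ v k) i := by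
    intro k i
    have hsplit : ((s k • B - A).submatrix (fun i : {i // i ∈ K} => (i.val : Fin n)) (fun i : {i // i ∈ K} => (i.val : Fin n)) *ᵥ ω k) i
        ≥ ((s k • B - A) *ᵥ W k) i.val := by
      have hfull : ((s k • B - A) *ᵥ W k) i.val
          = ∑ j ∈ K, (s k • B - A) i.val j * W k j
            + ∑ j ∈ Kᶜ, (s k • B - A) i.val j * W k j := by
        rw [show ((s k • B - A) *ᵥ W k) i.val = ∑ j, (s k • B - A) i.val j * W k j from rfl]
        rw [← Finset.sum_add_sum_compl K]
      have hneg : ∑ j ∈ Kᶜ, (s k • B - A) i.val j * W k j ≤ 0 := by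
        apply Finset.sum_nonpos
        intro j hj
        have hij : i.val ≠ j := by
          intro h
          rw [Finset.mem_compl] at hj
          exact hj (h ▸ i.prop)
        have hsk0 : (0:ℝ) ≤ s k := le_trans hρ0 (hsρ k).le
        exact mul_nonpos_of_nonpos_of_nonneg (hZ (s k) hsk0 (hs1 k) i.val j hij)
          (hWpos k j).le
      have hsum : ((s k • B - A).submatrix (fun i : {i // i ∈ K} => (i.val : Fin n)) (fun i : {i // i ∈ K} => (i.val : Fin n)) *ᵥ ω k) i
          = ∑ j ∈ K, (s k • B - A) i.val j * W k j := by
        rw [submVec_split]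
        rw [← Finset.sum_coe_sort K (fun j => (s k • B - A) i.val j * W k j)]
      rw [hfull, hsum]
      linarith
    have hone : ((s k • B - A) *ᵥ W k) i.val = 1 := by rw [hWone k]
    have hω0 : 0 ≤ ((s k • B - A).submatrix (fun i : {i // i ∈ K} => (i.val : Fin n)) (fun i : {i // i ∈ K} => (i.val : Fin n)) *ᵥ ω k) i := by
      rw [ge_iff_le] at hsplit
      linarith [hsplit, hone]
    have : ((s k • B - A).submatrix (fun i : {i // i ∈ K} => (i.val : Fin n)) (fun i : {i // i ∈ K} => (i.val : Fin n)) *ᵥ v k) i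
        = (σ k)⁻¹ * ((s k • B - A).submatrix (fun i : {i // i ∈ K} => (i.val : Fin n)) (fun i : {i // i ∈ K} => (i.val : Fin n)) *ᵥ ω k) i := by
      simp only [hv, Matrix.mulVec_smul]
      rfl
    rw [this]
    exact mul_nonneg (inv_nonneg.mpr (hσpos k).le) hω0
  -- compactness
  have hX : IsCompact (Set.Icc (0 : {i // i ∈ K} → ℝ) 1) := isCompact_Icc
  have hvX : ∀ k, v k ∈ Set.Icc (0 : {i // i ∈ K} → ℝ) 1 := by
    intro k
    constructor
    · intro i; exact hv0 k i
    · intro i; exact hv1 k i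
  obtain ⟨x, hxX, φ, hφ, hφtend⟩ := hX.tendsto_subseq hvX
  have hx0 : ∀ i, 0 ≤ x i := fun i => hxX.1 i
  -- coordinates converge
  have hcoord : ∀ i, Filter.Tendsto (fun k => v (φ k) i) Filter.atTop (nhds (x i)) :=
    fun i => ((continuous_apply i).tendsto x).comp hφtend
  have hxsum : ∑ i, x i = 1 := by
    have h1 : Filter.Tendsto (fun k => ∑ i, v (φ k) i) Filter.atTop (nhds (∑ i, x i)) :=
      tendsto_finset_sum _ (fun i _ => hcoord i)
    have h2 : (fun k => ∑ i, v (φ k) i) = fun _ => (1:ℝ) := by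
      funext k; exact hvsum (φ k)
    rw [h2] at h1
    exact (tendsto_nhds_unique tendsto_const_nhds h1).symm
  have hxne : x ≠ 0 := by
    intro hx
    rw [hx] at hxsum
    simp at hxsum
  refine ⟨x, hx0, hxne, ?_⟩
  intro i
  -- limit of the inequality
  have hsφ : Filter.Tendsto (fun k => s (φ k)) Filter.atTop (nhds ρ) :=
    hstend.comp hφ.tendsto_atTop
  have hBv : Filter.Tendsto
      (fun k => ((B.submatrix (fun i : {i // i ∈ K} => (i.val : Fin n)) (fun i : {i // i ∈ K} => (i.val : Fin n))) *ᵥ v (φ k)) i)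
      Filter.atTop (nhds (((B.submatrix (fun i : {i // i ∈ K} => (i.val : Fin n)) (fun i : {i // i ∈ K} => (i.val : Fin n))) *ᵥ x) i)) := by
    simp only [submVec_split]
    exact tendsto_finset_sum _ (fun j _ => (hcoord j).const_mul _)
  have hAv : Filter.Tendsto
      (fun k => ((A.submatrix (fun i : {i // i ∈ K} => (i.val : Fin n)) (fun i : {i // i ∈ K} => (i.val : Fin n))) *ᵥ v (φ k)) i)
      Filter.atTop (nhds (((A.submatrix (fun i : {i // i ∈ K} => (i.val : Fin n)) (fun i : {i // i ∈ K} => (i.val : Fin n))) *ᵥ x) i)) := by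
    simp only [submVec_split]
    exact tendsto_finset_sum _ (fun j _ => (hcoord j).const_mul _)
  have hlim : Filter.Tendsto
      (fun k => ((s (φ k) • B - A).submatrix (fun i : {i // i ∈ K} => (i.val : Fin n)) (fun i : {i // i ∈ K} => (i.val : Fin n)) *ᵥ v (φ k)) i)
      Filter.atTop (nhds ((((μ / (1 + μ)) • B - A).submatrix (fun i : {i // i ∈ K} => (i.val : Fin n)) (fun i : {i // i ∈ K} => (i.val : Fin n)) *ᵥ x) i)) := by
    have heq : ∀ k, ((s (φ k) • B - A).submatrix (fun i : {i // i ∈ K} => (i.val : Fin n)) (fun i : {i // i ∈ K} => (i.val : Fin n)) *ᵥ v (φ k)) i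
        = s (φ k) * ((B.submatrix (fun i : {i // i ∈ K} => (i.val : Fin n)) (fun i : {i // i ∈ K} => (i.val : Fin n))) *ᵥ v (φ k)) i
          - ((A.submatrix (fun i : {i // i ∈ K} => (i.val : Fin n)) (fun i : {i // i ∈ K} => (i.val : Fin n))) *ᵥ v (φ k)) i :=
      fun k => subm_linear A B (s (φ k)) K (v (φ k)) i
    have heq2 : (((μ / (1 + μ)) • B - A).submatrix (fun i : {i // i ∈ K} => (i.val : Fin n)) (fun i : {i // i ∈ K} => (i.val : Fin n)) *ᵥ x) i
        = ρ * ((B.submatrix (fun i : {i // i ∈ K} => (i.val : Fin n)) (fun i : {i // i ∈ K} => (i.val : Fin n))) *ᵥ x) i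
          - ((A.submatrix (fun i : {i // i ∈ K} => (i.val : Fin n)) (fun i : {i // i ∈ K} => (i.val : Fin n))) *ᵥ x) i :=
      subm_linear A B ρ K x i
    simp only [heq, heq2]
    exact (hsφ.mul hBv).sub hAv
  exact ge_of_tendsto' hlim (fun k => hkey (φ k) i)
end ClassCert

section Comb
variable {n : ℕ}

/-- Sum over a finset vs sum over its subtype. -/
lemma sum_over_K (K : Finset (Fin n)) (f : Fin n → ℝ) :
    ∑ j ∈ K, f j = ∑ j : {i // i ∈ K}, f j.val := (Finset.sum_coe_sort K f).symm

/-- mulVec of a vector supported on `K`, observed on a row in `K`. -/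
lemma mulVec_subm_eq (C : Matrix (Fin n) (Fin n) ℝ) (K : Finset (Fin n)) (x : Fin n → ℝ)
    (hx : ∀ j, j ∉ K → x j = 0) (i : Fin n) (hi : i ∈ K) :
    (C *ᵥ x) i = ((C.submatrix (fun p : {i // i ∈ K} => (p.val : Fin n))
      (fun p : {i // i ∈ K} => (p.val : Fin n))) *ᵥ (fun j => x j.val)) ⟨i, hi⟩ := by
  show ∑ j, C i j * x j = ∑ j : {i // i ∈ K}, C i j.val * x j.val
  rw [← Finset.sum_add_sum_compl K (fun j => C i j * x j)]
  rw [sum_over_K K (fun j => C i j * x j)]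
  have : ∑ j ∈ Kᶜ, C i j * x j = 0 := by
    apply Finset.sum_eq_zero
    intro j hj
    rw [hx j (Finset.mem_compl.mp hj), mul_zero]
  rw [this, add_zero]

/-- Lift of irreducibility to the subtype of a "class". -/
lemma subtype_irred (C : Matrix (Fin n) (Fin n) ℝ) (K : Finset (Fin n))
    (hcomm : ∀ a b, a ∈ K → b ∈ K →
      Relation.ReflTransGen (fun p q => p ≠ q ∧ C p q ≠ 0) a b)
    (hclosed : ∀ a b c, a ∈ K → b ∈ K →
      Relation.ReflTransGen (fun p q => p ≠ q ∧ C p q ≠ 0) a c →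
      Relation.ReflTransGen (fun p q => p ≠ q ∧ C p q ≠ 0) c b → c ∈ K) :
    ∀ i j : {i // i ∈ K}, Relation.ReflTransGen
      (fun p q : {i // i ∈ K} => p ≠ q ∧
        C.submatrix (fun p : {i // i ∈ K} => (p.val : Fin n))
          (fun p : {i // i ∈ K} => (p.val : Fin n)) p q ≠ 0) i j := by
  intro i j
  have hpath := hcomm i.val j.val i.prop j.prop
  -- head induction with membership invariant
  have key : ∀ a : Fin n, Relation.ReflTransGen (fun p q => p ≠ q ∧ C p q ≠ 0) a j.val →
      ∀ ha : a ∈ K, Relation.ReflTransGen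
        (fun p q : {i // i ∈ K} => p ≠ q ∧
          C.submatrix (fun p : {i // i ∈ K} => (p.val : Fin n))
            (fun p : {i // i ∈ K} => (p.val : Fin n)) p q ≠ 0) ⟨a, ha⟩ j := by
    intro a h
    induction h using Relation.ReflTransGen.head_induction_on with
    | refl =>
      intro ha
      have : (⟨j.val, ha⟩ : {i // i ∈ K}) = j := Subtype.ext rfl
      rw [this]
    | @head a' c hedge hpath ih =>
      intro ha
      have hc : c ∈ K := hclosed a' j.val c ha j.prop
        (Relation.ReflTransGen.single hedge) hpath
      refine Relation.ReflTransGen.head ?_ (ih hc)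
      constructor
      · intro hcon
        exact hedge.1 (congrArg Subtype.val hcon)
      · exact hedge.2
  exact key i.val hpath i.prop

/-- First exit of a path from a set. -/
lemma first_exit (Δ : Fin n → Fin n → Prop) (K : Finset (Fin n)) :
    ∀ a c, Relation.ReflTransGen Δ a c → a ∈ K → c ∉ K →
      ∃ p ∈ K, ∃ q, q ∉ K ∧ Δ p q ∧ Relation.ReflTransGen Δ q c := by
  intro a c h
  induction h using Relation.ReflTransGen.head_induction_on with
  | refl => intro ha hc; exact absurd ha hc
  | @head a' b hedge hpath ih =>
    intro ha hc
    by_cases hb : b ∈ K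
    · exact ih hb hc
    · exact ⟨a', ha, b, hb, hedge, hpath⟩
end Comb

lemma subm_eq {n : ℕ} (X : Matrix (Fin n) (Fin n) ℝ) (K : Finset (Fin n)) :
    subm X K = X.submatrix (fun p : {i // i ∈ K} => (p.val : Fin n))
      (fun p : {i // i ∈ K} => (p.val : Fin n)) := rfl

/-- Existence and combinatorial structure of a nonnegative null vector of
`ρ(A,B)B − A` associated with a distinguished singular class `J` of `Γ`:
`x_j > 0` exactly when `j` has access in `Γ` to a vertex of `J`, and any
nonnegative null vector with exactly this support is a positive multiple
of `x`. -/
theorem stmt_12 {n : ℕ} (A B : Matrix (Fin n) (Fin n) ℝ)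
    (hc1 : ∀ i j, 0 ≤ A i j)
    (hc2 : ∀ i j, i ≠ j → B i j ≤ A i j)
    (hc3 : ∃ u : Fin n → ℝ, (∀ i, 0 < u i) ∧ ∀ i, 0 < (B - A).mulVec u i)
    (μ ρAB : ℝ) (hμ : μ = specRad ((B - A)⁻¹ * A)) (hρ : ρAB = μ / (1 + μ))
    (Γ : Fin n → Fin n → Prop)
    (hΓ : Γ = if ρAB ≠ 0 then (fun j k => A j k ≠ 0 ∨ B j k ≠ 0)
              else (fun j k => A j k ≠ 0))
    (J : Finset (Fin n)) (hJclass : IsClass Γ J)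
    (hJsing : ¬ IsUnit (subm (ρAB • B - A) J).det)
    (hdist : ∀ K : Finset (Fin n), IsClass Γ K → K ≠ J →
      (∃ k ∈ K, ∃ v ∈ J, Access Γ k v) →
      IsUnit (subm (ρAB • B - A) K).det) :
    ∃ x : Fin n → ℝ, (∀ j, 0 ≤ x j) ∧ (ρAB • B - A).mulVec x = 0 ∧
      (∀ j, (0 < x j ↔ ∃ v ∈ J, Access Γ j v)) ∧
      ∀ y : Fin n → ℝ, (∀ j, 0 ≤ y j) → (ρAB • B - A).mulVec y = 0 →
        (∀ j, (0 < y j ↔ ∃ v ∈ J, Access Γ j v)) →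
        ∃ c : ℝ, 0 < c ∧ y = c • x := by
  classical
  obtain ⟨u, hu, hu2⟩ := hc3
  have hμ0 : 0 ≤ μ := hμ ▸ specRad_nonneg _
  have hρ0 : 0 ≤ ρAB := hρ ▸ div_nonneg hμ0 (by linarith)
  have hρ1 : ρAB < 1 := by
    rw [hρ, div_lt_one (by linarith)]; linarith
  set C : Matrix (Fin n) (Fin n) ℝ := ρAB • B - A with hCdef
  -- Z-sign property
  have hZs : ∀ s : ℝ, 0 ≤ s → s ≤ 1 → ∀ i j, i ≠ j → (s • B - A) i j ≤ 0 := by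
    intro s h0 h1 i j hij
    have hb := hc2 i j hij
    have ha := hc1 i j
    simp only [Matrix.sub_apply, Matrix.smul_apply, smul_eq_mul]
    nlinarith
  have hCZ : ∀ i j, i ≠ j → C i j ≤ 0 := fun i j hij => hZs ρAB hρ0 hρ1.le i j hij
  have hBAZ : ∀ i j, i ≠ j → (B - A) i j ≤ 0 := by
    intro i j hij
    have := hZs 1 zero_le_one le_rfl i j hij
    rwa [one_smul] at this
  have hBAdet : IsUnit (B - A).det := cert_det _ hBAZ u hu hu2
  -- edge relation
  set Δ : Fin n → Fin n → Prop := fun p q => p ≠ q ∧ C p q ≠ 0 with hΔdef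
  have hedge : ∀ i j, i ≠ j → (Γ i j ↔ C i j ≠ 0) := by
    intro i j hij
    by_cases hz : ρAB = 0
    · rw [hΓ, if_neg (by simpa using hz)]
      have : C i j = -(A i j) := by
        simp [hCdef, Matrix.sub_apply, Matrix.smul_apply, hz]
      rw [this]
      simp
    · rw [hΓ, if_pos (by simpa using hz)]
      have hρpos : 0 < ρAB := lt_of_le_of_ne hρ0 (Ne.symm hz)
      have hCij : C i j = ρAB * B i j - A i j := by
        simp [hCdef, Matrix.sub_apply, Matrix.smul_apply]
      constructor
      · rintro (hA | hB)
        · have hApos : 0 < A i j := lt_of_le_of_ne (hc1 i j) (Ne.symm hA)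
          have h1 : ρAB * B i j ≤ ρAB * A i j :=
            mul_le_mul_of_nonneg_left (hc2 i j hij) hρ0
          rw [hCij]; nlinarith
        · by_cases hA : A i j = 0
          · have hBle : B i j ≤ 0 := hA ▸ hc2 i j hij
            have hBneg : B i j < 0 := lt_of_le_of_ne hBle hB
            rw [hCij, hA]; nlinarith
          · have hApos : 0 < A i j := lt_of_le_of_ne (hc1 i j) (Ne.symm hA)
            have h1 : ρAB * B i j ≤ ρAB * A i j :=
              mul_le_mul_of_nonneg_left (hc2 i j hij) hρ0
            rw [hCij]; nlinarith
      · intro hC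
        by_contra hcon
        push_neg at hcon
        rw [hCij, hcon.1, hcon.2] at hC
        simp at hC
  have haccess : ∀ a b, Access Γ a b ↔ Relation.ReflTransGen Δ a b := by
    intro a b
    constructor
    · intro h
      induction h with
      | refl => exact Relation.ReflTransGen.refl
      | @tail b' c hp he ih =>
        by_cases hbc : b' = c
        · rw [← hbc]; exact ih
        · exact ih.tail ⟨hbc, (hedge b' c hbc).mp he⟩
    · intro h
      induction h with
      | refl => exact Relation.ReflTransGen.refl
      | @tail b' c hp he ih =>
        exact ih.tail ((hedge b' c he.1).mpr he.2)
  -- the access set S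
  set S : Finset (Fin n) := Finset.univ.filter (fun j => ∃ v ∈ J, Access Γ j v) with hSdef
  have hSmem : ∀ j, j ∈ S ↔ ∃ v ∈ J, Access Γ j v := by
    intro j; simp [hSdef]
  obtain ⟨v0, hv0⟩ := hJclass
  have hJne : J.Nonempty :=
    ⟨v0, (hv0 v0).mpr ⟨Relation.ReflTransGen.refl, Relation.ReflTransGen.refl⟩⟩
  have hJS : ∀ j ∈ J, j ∈ S := by
    intro j hj
    exact (hSmem j).mpr ⟨j, hj, Relation.ReflTransGen.refl⟩
  -- facts about J as a class
  have hJcomm : ∀ a b, a ∈ J → b ∈ J → Communicate Γ a b := by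
    intro a b ha hb
    have h1 := (hv0 a).mp ha
    have h2 := (hv0 b).mp hb
    exact ⟨h1.2.trans h2.1, h2.2.trans h1.1⟩
  have hJclosed2 : ∀ a c, a ∈ J → Access Γ a c → (Access Γ c a) → c ∈ J := by
    intro a c ha h1 h2
    have hva := (hv0 a).mp ha
    exact (hv0 c).mpr ⟨hva.1.trans h1, h2.trans hva.2⟩
  -- membership in S propagates backwards along access
  have hSback : ∀ a b, Access Γ a b → b ∈ S → a ∈ S := by
    intro a b hab hb
    obtain ⟨v, hv, hacc⟩ := (hSmem b).mp hb
    exact (hSmem a).mpr ⟨v, hv, hab.trans hacc⟩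
  -- L1 : no edges from outside S into S
  have hL1 : ∀ i j, i ∉ S → j ∈ S → C i j = 0 := by
    intro i j hiS hjS
    by_contra hC
    have hij : i ≠ j := by rintro rfl; exact hiS hjS
    have hacc : Access Γ i j := Relation.ReflTransGen.single ((hedge i j hij).mpr hC)
    exact hiS (hSback i j hacc hjS)
  -- certificates for classes: specialize class_cert
  have hccert : ∀ K : Finset (Fin n), K.Nonempty →
      ∃ w : {i // i ∈ K} → ℝ, (∀ i, 0 ≤ w i) ∧ w ≠ 0 ∧
        ∀ i, 0 ≤ ((subm C K) *ᵥ w) i := by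
    intro K hK
    obtain ⟨w, h1, h2, h3⟩ := class_cert A B hBAdet μ hμ hμ0 hZs u hu hu2 K hK
    refine ⟨w, h1, h2, ?_⟩
    intro i
    have := h3 i
    rw [subm_eq]
    convert this using 3
    rw [hCdef, hρ]
  -- Z property and irreducibility of subm on a "class-like" set
  have hsubZ : ∀ K : Finset (Fin n), ∀ i j : {i // i ∈ K}, i ≠ j → (subm C K) i j ≤ 0 := by
    intro K i j hij
    apply hCZ
    intro hval
    exact hij (Subtype.ext hval)
  have hsubirr : ∀ K : Finset (Fin n),
      (∀ a b, a ∈ K → b ∈ K → Communicate Γ a b) →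
      (∀ a c, a ∈ K → Access Γ a c → Access Γ c a → c ∈ K) →
      ∀ i j : {i // i ∈ K}, Relation.ReflTransGen
        (fun p q : {i // i ∈ K} => p ≠ q ∧ (subm C K) p q ≠ 0) i j := by
    intro K hcomm hclosed i j
    rw [subm_eq]
    apply subtype_irred C K
    · intro a b ha hb
      have := (hcomm a b ha hb).1
      rwa [haccess] at this
    · intro a b c ha hb hac hcb
      apply hclosed a c ha
      · rw [haccess]; exact hac
      · rw [haccess]
        exact hcb.trans (by
          have := (hcomm b a hb ha).1
          rwa [haccess] at this)
  -- ================= MAIN EXISTENCE INDUCTION =================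
  have main : ∀ N : ℕ, ∀ T : Finset (Fin n), T.card ≤ N →
      (∀ j ∈ J, j ∈ T) → (∀ i ∈ T, i ∈ S) →
      (∀ i ∈ T, ∀ w, Communicate Γ i w → w ∈ T) →
      (∀ i ∈ T, ∀ j, Access Γ i j → j ∈ S → j ∈ T) →
      ∃ x : Fin n → ℝ, (∀ j, 0 ≤ x j) ∧ (∀ j, (0 < x j ↔ j ∈ T)) ∧
        (∀ j, j ∉ T → x j = 0) ∧ ∀ i ∈ T, (C *ᵥ x) i = 0 := by
    intro N
    induction N with
    | zero =>
      intro T hcard hJT hTS hTcomm hTacc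
      exfalso
      have hv0T : v0 ∈ T := hJT v0 ((hv0 v0).mpr ⟨Relation.ReflTransGen.refl,
        Relation.ReflTransGen.refl⟩)
      have : T = ∅ := Finset.card_eq_zero.mp (le_antisymm hcard (Nat.zero_le _))
      rw [this] at hv0T
      exact absurd hv0T (Finset.notMem_empty v0)
    | succ N ih =>
      intro T hcard hJT hTS hTcomm hTacc
      by_cases hTJ : T = J
      · -- base : T = J
        subst hTJ
        obtain ⟨w0, hw0nn, hw0ne, hw0cert⟩ := hccert T hJne
        have hirrJ := hsubirr T hJcomm (fun a c ha h1 h2 => hJclosed2 a c ha h1 h2)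
        have hw0pos : ∀ i, 0 < w0 i := irred_pos _ (hsubZ T) hirrJ w0 hw0nn hw0ne hw0cert
        have hdet0 : (subm C T).det = 0 := by
          by_contra h
          exact hJsing (isUnit_iff_ne_zero.mpr h)
        obtain ⟨z, hzne, hznull⟩ := Matrix.exists_mulVec_eq_zero_iff.mpr hdet0
        have hnull : (subm C T) *ᵥ w0 = 0 :=
          irred_cert_null _ (hsubZ T) hirrJ w0 hw0pos hw0cert z hzne hznull
        refine ⟨fun j => if h : j ∈ T then w0 ⟨j, h⟩ else 0, ?_, ?_, ?_, ?_⟩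
        · intro j
          by_cases h : j ∈ T
          · simp only [dif_pos h]; exact (hw0pos _).le
          · simp only [dif_neg h]; exact le_rfl
        · intro j
          by_cases h : j ∈ T
          · simp only [dif_pos h]
            exact ⟨fun _ => h, fun _ => hw0pos _⟩
          · simp only [dif_neg h]
            exact ⟨fun hc => absurd rfl (ne_of_lt hc), fun hc => absurd hc h⟩
        · intro j hj
          simp only [dif_neg hj]
        · intro i hiT
          have hsupp : ∀ j, j ∉ T → (fun j => if h : j ∈ T then w0 ⟨j, h⟩ else 0) j = 0 := by
            intro j hj; simp only [dif_neg hj]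
          rw [mulVec_subm_eq C T _ hsupp i hiT]
          have : (fun j : {i // i ∈ T} =>
              (fun j => if h : j ∈ T then w0 ⟨j, h⟩ else 0) j.val) = w0 := by
            funext j
            simp only [dif_pos j.prop]
          rw [← subm_eq, this]
          rw [hnull]
          rfl
      · -- inductive step: peel a source class K ≠ J
        have hTJne : (T \ J).Nonempty := by
          rw [Finset.sdiff_nonempty]
          intro hsub
          exact hTJ (Finset.Subset.antisymm hsub (fun j hj => hJT j hj))
        obtain ⟨v1, hv1mem, hv1max⟩ := exists_extremal (fun a b => Access Γ a b)
          (fun a => Relation.ReflTransGen.refl) (fun a b c h1 h2 => h1.trans h2)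
          (T \ J) hTJne
        have hv1T : v1 ∈ T := (Finset.mem_sdiff.mp hv1mem).1
        have hv1J : v1 ∉ J := (Finset.mem_sdiff.mp hv1mem).2
        have hv1S : v1 ∈ S := hTS v1 hv1T
        obtain ⟨vJ, hvJ, hv1vJ⟩ := (hSmem v1).mp hv1S
        set K : Finset (Fin n) := Finset.univ.filter (fun w => Communicate Γ v1 w) with hKdef
        have hKmem : ∀ w, w ∈ K ↔ Communicate Γ v1 w := by intro w; simp [hKdef]
        have hv1K : v1 ∈ K := (hKmem v1).mpr ⟨Relation.ReflTransGen.refl,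
          Relation.ReflTransGen.refl⟩
        have hKT : ∀ j ∈ K, j ∈ T := fun j hj => hTcomm v1 hv1T j ((hKmem j).mp hj)
        have hKJ : ∀ j ∈ K, j ∉ J := by
          intro j hjK hjJ
          have hcomm := (hKmem j).mp hjK
          exact hv1J (hJclosed2 j v1 hjJ hcomm.2 hcomm.1)
        have hnoaccess : ∀ i, i ∈ T → i ∉ K → Access Γ i v1 → False := by
          intro i hiT hiK hacc
          by_cases hiJ : i ∈ J
          · have hvJi : Access Γ vJ i := (hJcomm vJ i hvJ hiJ).1
            have hv1i : Access Γ v1 i := hv1vJ.trans hvJi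
            exact hv1J (hJclosed2 i v1 hiJ hacc hv1i)
          · have hmem : i ∈ T \ J := Finset.mem_sdiff.mpr ⟨hiT, hiJ⟩
            have hvi := hv1max i hmem hacc
            exact hiK ((hKmem i).mpr ⟨hvi, hacc⟩)
        set T' := T \ K with hT'def
        have hT'card : T'.card ≤ N := by
          have h1 : T' ⊆ T.erase v1 := by
            intro j hj
            rw [Finset.mem_erase]
            rw [hT'def, Finset.mem_sdiff] at hj
            exact ⟨fun hc => hj.2 (hc ▸ hv1K), hj.1⟩
          have h2 := Finset.card_le_card h1
          have h3 := Finset.card_erase_of_mem hv1T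
          omega
        have hJT' : ∀ j ∈ J, j ∈ T' :=
          fun j hj => Finset.mem_sdiff.mpr ⟨hJT j hj, fun hc => hKJ j hc hj⟩
        have hT'S : ∀ i ∈ T', i ∈ S := fun i hi => hTS i (Finset.mem_sdiff.mp hi).1
        have hT'comm : ∀ i ∈ T', ∀ w, Communicate Γ i w → w ∈ T' := by
          intro i hi w hw
          rw [hT'def, Finset.mem_sdiff] at hi ⊢
          refine ⟨hTcomm i hi.1 w hw, ?_⟩
          intro hwK
          apply hi.2
          have hcw := (hKmem w).mp hwK
          exact (hKmem i).mpr ⟨hcw.1.trans hw.2, hw.1.trans hcw.2⟩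
        have hT'acc : ∀ i ∈ T', ∀ j, Access Γ i j → j ∈ S → j ∈ T' := by
          intro i hi j hij hjS
          rw [hT'def, Finset.mem_sdiff] at hi ⊢
          refine ⟨hTacc i hi.1 j hij hjS, ?_⟩
          intro hjK
          have hjv1 : Access Γ j v1 := ((hKmem j).mp hjK).2
          exact hnoaccess i hi.1 hi.2 (hij.trans hjv1)
        obtain ⟨x', hx'0, hx'pos, hx'zero, hx'rows⟩ := ih T' hT'card hJT' hT'S hT'comm hT'acc
        have hKclass : IsClass Γ K := ⟨v1, fun w => hKmem w⟩
        have hKneJ : K ≠ J := fun hc => hv1J (hc ▸ hv1K)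
        have hKdetU : IsUnit (subm C K).det :=
          hdist K hKclass hKneJ ⟨v1, hv1K, vJ, hvJ, hv1vJ⟩
        have hKcomm : ∀ a b, a ∈ K → b ∈ K → Communicate Γ a b := by
          intro a b ha hb
          have h1 := (hKmem a).mp ha
          have h2 := (hKmem b).mp hb
          exact ⟨h1.2.trans h2.1, h2.2.trans h1.1⟩
        have hKclosed : ∀ a c, a ∈ K → Access Γ a c → Access Γ c a → c ∈ K := by
          intro a c ha h1 h2
          have hva := (hKmem a).mp ha
          exact (hKmem c).mpr ⟨hva.1.trans h1, h2.trans hva.2⟩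
        have hirrK := hsubirr K hKcomm hKclosed
        obtain ⟨wK, hwKnn, hwKne, hwKcert⟩ := hccert K ⟨v1, hv1K⟩
        have hwKpos := irred_pos _ (hsubZ K) hirrK wK hwKnn hwKne hwKcert
        set g : {i // i ∈ K} → ℝ := fun i => (C *ᵥ x') i.val with hgdef
        have hx'K : ∀ j ∈ K, x' j = 0 := by
          intro j hj
          apply hx'zero
          intro hc
          exact (Finset.mem_sdiff.mp hc).2 hj
        have htermle : ∀ (i : Fin n), i ∈ K → ∀ j, C i j * x' j ≤ 0 := by
          intro i hi j
          by_cases hx'j : x' j = 0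
          · rw [hx'j, mul_zero]
          · have hjT' : j ∈ T' := by
              by_contra hc
              exact hx'j (hx'zero j hc)
            have hij : i ≠ j := by
              intro hc
              exact (Finset.mem_sdiff.mp hjT').2 (hc ▸ hi)
            exact mul_nonpos_of_nonpos_of_nonneg (hCZ _ _ hij) (hx'0 j)
        have hgle : ∀ i, g i ≤ 0 := by
          intro i
          show ∑ j, C i.val j * x' j ≤ 0
          apply Finset.sum_nonpos
          intro j _
          exact htermle i.val i.prop j
        have hgne : g ≠ 0 := by
          have hpathΔ : Relation.ReflTransGen Δ v1 vJ := (haccess v1 vJ).mp hv1vJ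
          have hvJK : vJ ∉ K := fun hc => hKJ vJ hc hvJ
          obtain ⟨p, hpK, q, hqK, hpq, hqpath⟩ := first_exit Δ K v1 vJ hpathΔ hv1K hvJK
          have hqS : q ∈ S := (hSmem q).mpr ⟨vJ, hvJ, (haccess q vJ).mpr hqpath⟩
          have hΓpq : Γ p q := (hedge p q hpq.1).mpr hpq.2
          have hqT : q ∈ T := hTacc p (hKT p hpK) q (Relation.ReflTransGen.single hΓpq) hqS
          have hqT' : q ∈ T' := Finset.mem_sdiff.mpr ⟨hqT, hqK⟩
          have hx'q : 0 < x' q := (hx'pos q).mpr hqT'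
          intro hgeq
          have hneg : g ⟨p, hpK⟩ < 0 := by
            show ∑ j, C p j * x' j < 0
            have hsplit : ∑ j ∈ Finset.univ.erase q, C p j * x' j + C p q * x' q
                = ∑ j, C p j * x' j :=
              Finset.sum_erase_add Finset.univ _ (Finset.mem_univ q)
            rw [← hsplit]
            have h1 : ∑ j ∈ Finset.univ.erase q, C p j * x' j ≤ 0 :=
              Finset.sum_nonpos (fun j _ => htermle p hpK j)
            have hCpq : C p q < 0 := lt_of_le_of_ne (hCZ p q hpq.1) hpq.2
            nlinarith
          rw [hgeq] at hneg
          exact absurd hneg (lt_irrefl 0)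
        set e : {i // i ∈ K} → ℝ := fun i => -(g i) with hedef
        have he0 : ∀ i, 0 ≤ e i := fun i => neg_nonneg.mpr (hgle i)
        have hene : e ≠ 0 := by
          intro hc
          apply hgne
          funext i
          have := congrFun hc i
          simp only [hedef, Pi.zero_apply, neg_eq_zero] at this
          exact this
        set ξ : {i // i ∈ K} → ℝ := (subm C K)⁻¹ *ᵥ e with hξdef
        have hξsol : (subm C K) *ᵥ ξ = e := by
          rw [hξdef, Matrix.mulVec_mulVec, Matrix.mul_nonsing_inv _ hKdetU, Matrix.one_mulVec]
        have hξpos : ∀ i, 0 < ξ i :=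
          irred_solution_pos _ (hsubZ K) hirrK wK hwKpos hwKcert hKdetU e he0 hene ξ hξsol
        refine ⟨fun j => if h : j ∈ K then ξ ⟨j, h⟩ else x' j, ?_, ?_, ?_, ?_⟩
        · intro j
          by_cases h : j ∈ K
          · simp only [dif_pos h]; exact (hξpos _).le
          · simp only [dif_neg h]; exact hx'0 j
        · intro j
          by_cases h : j ∈ K
          · simp only [dif_pos h]
            exact ⟨fun _ => hKT j h, fun _ => hξpos _⟩
          · simp only [dif_neg h]
            rw [hx'pos j]
            constructor
            · intro hj
              exact (Finset.mem_sdiff.mp hj).1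
            · intro hj
              exact Finset.mem_sdiff.mpr ⟨hj, h⟩
        · intro j hjT
          have hjK : j ∉ K := fun hc => hjT (hKT j hc)
          simp only [dif_neg hjK]
          exact hx'zero j (fun hc => hjT (Finset.mem_sdiff.mp hc).1)
        · intro i hiT
          by_cases hiK : i ∈ K
          · show ∑ j, C i j * (if h : j ∈ K then ξ ⟨j, h⟩ else x' j) = 0
            rw [← Finset.sum_add_sum_compl K]
            have hKpart : ∑ j ∈ K, C i j * (if h : j ∈ K then ξ ⟨j, h⟩ else x' j)
                = -((C *ᵥ x') i) := by
              rw [sum_over_K K (fun j => C i j * (if h : j ∈ K then ξ ⟨j, h⟩ else x' j))]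
              have heq : ∀ j : {i // i ∈ K},
                  C i j.val * (if h : j.val ∈ K then ξ ⟨j.val, h⟩ else x' j.val)
                    = (subm C K) ⟨i, hiK⟩ j * ξ j := by
                intro j
                rw [dif_pos j.prop]
                rfl
              rw [Finset.sum_congr rfl (fun j _ => heq j)]
              have : ∑ j : {i // i ∈ K}, (subm C K) ⟨i, hiK⟩ j * ξ j
                  = ((subm C K) *ᵥ ξ) ⟨i, hiK⟩ := rfl
              rw [this, hξsol]
            have hCpart : ∑ j ∈ Kᶜ, C i j * (if h : j ∈ K then ξ ⟨j, h⟩ else x' j)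
                = (C *ᵥ x') i := by
              have heq : ∀ j ∈ Kᶜ, C i j * (if h : j ∈ K then ξ ⟨j, h⟩ else x' j)
                  = C i j * x' j := by
                intro j hj
                rw [dif_neg (Finset.mem_compl.mp hj)]
              rw [Finset.sum_congr rfl heq]
              have hfull : (C *ᵥ x') i = ∑ j ∈ K, C i j * x' j + ∑ j ∈ Kᶜ, C i j * x' j := by
                rw [Finset.sum_add_sum_compl K (fun j => C i j * x' j)]
                rfl
              have hKzero : ∑ j ∈ K, C i j * x' j = 0 :=
                Finset.sum_eq_zero (fun j hj => by rw [hx'K j hj, mul_zero])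
              rw [hfull, hKzero, zero_add]
            rw [hKpart, hCpart]
            ring
          · have hiT' : i ∈ T' := Finset.mem_sdiff.mpr ⟨hiT, hiK⟩
            have hCiK : ∀ j ∈ K, C i j = 0 := by
              intro j hj
              by_contra hC
              have hij : i ≠ j := fun hc => hiK (hc ▸ hj)
              have hacc : Access Γ i v1 :=
                (Relation.ReflTransGen.single ((hedge i j hij).mpr hC)).trans
                  ((hKmem j).mp hj).2
              exact hnoaccess i hiT hiK hacc
            show ∑ j, C i j * (if h : j ∈ K then ξ ⟨j, h⟩ else x' j) = 0
            have heq : ∀ j, C i j * (if h : j ∈ K then ξ ⟨j, h⟩ else x' j) = C i j * x' j := by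
              intro j
              by_cases h : j ∈ K
              · rw [hCiK j h, zero_mul, zero_mul]
              · simp only [dif_neg h]
            rw [Finset.sum_congr rfl (fun j _ => heq j)]
            exact hx'rows i hiT'

  -- ================= ASSEMBLE =================
  -- S is good
  have hSgood1 : ∀ j ∈ J, j ∈ S := hJS
  have hSgood2 : ∀ i ∈ S, i ∈ S := fun i hi => hi
  have hSgood3 : ∀ i ∈ S, ∀ w, Communicate Γ i w → w ∈ S :=
    fun i hi w hw => hSback w i hw.2 hi
  have hSgood4 : ∀ i ∈ S, ∀ j, Access Γ i j → j ∈ S → j ∈ S := fun i _ j _ hj => hj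
  obtain ⟨x, hx0, hxpos, hxzero, hxrows⟩ :=
    main S.card S le_rfl hSgood1 hSgood2 hSgood3 hSgood4
  have hxnull : C *ᵥ x = 0 := by
    funext i
    by_cases hiS : i ∈ S
    · exact hxrows i hiS
    · show ∑ j, C i j * x j = 0
      apply Finset.sum_eq_zero
      intro j _
      by_cases hjS : j ∈ S
      · rw [hL1 i j hiS hjS, zero_mul]
      · rw [hxzero j (fun hc => hjS hc), mul_zero]
  refine ⟨x, hx0, hxnull, ?_, ?_⟩
  · intro j
    rw [hxpos j, hSmem j]
  -- ================= UNIQUENESS =================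
  · intro y hy0 hynull hysupp
    have hySmem : ∀ j, (0 < y j ↔ j ∈ S) := fun j => (hysupp j).trans (hSmem j).symm
    have hyzero : ∀ j, j ∉ S → y j = 0 := by
      intro j hj
      rcases lt_or_eq_of_le (hy0 j) with h | h
      · exact absurd ((hySmem j).mp h) hj
      · exact h.symm
    have hv0J : v0 ∈ J := (hv0 v0).mpr ⟨Relation.ReflTransGen.refl,
      Relation.ReflTransGen.refl⟩
    have hv0S : v0 ∈ S := hJS v0 hv0J
    obtain ⟨i0, hi0S, hi0min⟩ := Finset.exists_min_image S (fun i => y i / x i) ⟨v0, hv0S⟩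
    set t := y i0 / x i0 with htdef
    have hxi0 : 0 < x i0 := (hxpos i0).mpr hi0S
    have hyi0 : 0 < y i0 := (hySmem i0).mpr hi0S
    have htpos : 0 < t := div_pos hyi0 hxi0
    set z : Fin n → ℝ := fun i => y i - t * x i with hzdef
    have hz0 : ∀ i, 0 ≤ z i := by
      intro i
      by_cases hiS : i ∈ S
      · have h1 := hi0min i hiS
        have hxi : 0 < x i := (hxpos i).mpr hiS
        rw [le_div_iff₀ hxi] at h1
        simp only [hzdef]
        linarith
      · simp only [hzdef]
        rw [hyzero i hiS, hxzero i hiS]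
        norm_num
    have hznull : C *ᵥ z = 0 := by
      funext i
      show ∑ j, C i j * (y j - t * x j) = 0
      have hterm : ∀ j, C i j * (y j - t * x j) = C i j * y j - t * (C i j * x j) :=
        fun j => by ring
      rw [Finset.sum_congr rfl (fun j _ => hterm j), Finset.sum_sub_distrib, ← Finset.mul_sum]
      have h1 : ∑ j, C i j * y j = 0 := congrFun hynull i
      have h2 : ∑ j, C i j * x j = 0 := congrFun hxnull i
      rw [h1, h2]
      ring
    have hzi0 : z i0 = 0 := by
      simp only [hzdef, htdef]
      rw [div_mul_cancel₀ _ (ne_of_gt hxi0)]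
      ring
    have hCznn : ∀ i, 0 ≤ (C *ᵥ z) i := by
      intro i
      rw [hznull]
      exact le_rfl
    have hprop := zero_propagate C hCZ z hz0 hCznn
    obtain ⟨vj0, hvj0J, hi0acc⟩ := (hSmem i0).mp hi0S
    have hzJ : ∀ w ∈ J, z w = 0 := by
      intro w hw
      have h1 : z vj0 = 0 := hprop i0 vj0 ((haccess i0 vj0).mp hi0acc) hzi0
      have h2 : Access Γ vj0 w := (hJcomm vj0 w hvj0J hw).1
      exact hprop vj0 w ((haccess _ _).mp h2) h1
    set T2 : Finset (Fin n) := S.filter (fun i => 0 < z i) with hT2def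
    have hT2mem : ∀ i, i ∈ T2 ↔ (i ∈ S ∧ 0 < z i) := by intro i; simp [hT2def]
    have hT2empty : T2 = ∅ := by
      by_contra hne
      obtain ⟨v2, hv2mem, hv2min⟩ := exists_extremal (fun a b => Access Γ b a)
        (fun a => Relation.ReflTransGen.refl) (fun a b c h1 h2 => h2.trans h1) T2
        (Finset.nonempty_of_ne_empty hne)
      have hv2S : v2 ∈ S := ((hT2mem v2).mp hv2mem).1
      have hv2z : 0 < z v2 := ((hT2mem v2).mp hv2mem).2
      set K2 : Finset (Fin n) := Finset.univ.filter (fun w => Communicate Γ v2 w) with hK2def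
      have hK2mem : ∀ w, w ∈ K2 ↔ Communicate Γ v2 w := by intro w; simp [hK2def]
      have hv2K2 : v2 ∈ K2 := (hK2mem v2).mpr ⟨Relation.ReflTransGen.refl,
        Relation.ReflTransGen.refl⟩
      have hK2class : IsClass Γ K2 := ⟨v2, fun w => hK2mem w⟩
      have hK2J : K2 ≠ J := by
        intro hc
        have hv2J : v2 ∈ J := hc ▸ hv2K2
        have := hzJ v2 hv2J
        rw [this] at hv2z
        exact lt_irrefl 0 hv2z
      obtain ⟨vJ2, hvJ2, hv2vJ2⟩ := (hSmem v2).mp hv2S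
      have hK2det : IsUnit (subm C K2).det :=
        hdist K2 hK2class hK2J ⟨v2, hv2K2, vJ2, hvJ2, hv2vJ2⟩
      set ζ : {i // i ∈ K2} → ℝ := fun i => z i.val with hζdef
      have hζne : ζ ≠ 0 := by
        intro hc
        have := congrFun hc ⟨v2, hv2K2⟩
        simp only [hζdef, Pi.zero_apply] at this
        rw [this] at hv2z
        exact lt_irrefl 0 hv2z
      have hζnull : (subm C K2) *ᵥ ζ = 0 := by
        funext i
        show ∑ j : {i // i ∈ K2}, C i.val j.val * z j.val = 0
        have hrow : ∑ j, C i.val j * z j = 0 := congrFun hznull i.val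
        have hout : ∑ j ∈ K2ᶜ, C i.val j * z j = 0 := by
          apply Finset.sum_eq_zero
          intro j hj
          have hjK2 : j ∉ K2 := Finset.mem_compl.mp hj
          by_cases hzj : z j = 0
          · rw [hzj, mul_zero]
          · have hzjpos : 0 < z j := lt_of_le_of_ne (hz0 j) (Ne.symm hzj)
            have hyj : 0 < y j := by
              have h1 := hx0 j
              simp only [hzdef] at hzjpos
              nlinarith
            have hjS : j ∈ S := (hySmem j).mp hyj
            have hjT2 : j ∈ T2 := (hT2mem j).mpr ⟨hjS, hzjpos⟩
            by_cases hC : C i.val j = 0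
            · rw [hC, zero_mul]
            · exfalso
              have hij : i.val ≠ j := fun hcc => hjK2 (hcc ▸ i.prop)
              have hacc1 : Access Γ i.val j :=
                Relation.ReflTransGen.single ((hedge _ _ hij).mpr hC)
              have hacc2 : Access Γ v2 j := ((hK2mem i.val).mp i.prop).1.trans hacc1
              have hacc3 : Access Γ j v2 := hv2min j hjT2 hacc2
              exact hjK2 ((hK2mem j).mpr ⟨hacc2, hacc3⟩)
        have hin : ∑ j ∈ K2, C i.val j * z j = 0 := by
          have h := hrow
          rw [← Finset.sum_add_sum_compl K2 (fun j => C i.val j * z j), hout, add_zero] at h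
          exact h
        rw [sum_over_K K2 (fun j => C i.val j * z j)] at hin
        exact hin
      have hdet0 : (subm C K2).det = 0 :=
        Matrix.exists_mulVec_eq_zero_iff.mp ⟨ζ, hζne, hζnull⟩
      exact (isUnit_iff_ne_zero.mp hK2det) hdet0
    have hzall : ∀ i, z i = 0 := by
      intro i
      by_cases hiS : i ∈ S
      · rcases lt_or_eq_of_le (hz0 i) with h | h
        · exfalso
          have : i ∈ T2 := (hT2mem i).mpr ⟨hiS, h⟩
          rw [hT2empty] at this
          exact absurd this (Finset.notMem_empty i)
        · exact h.symm
      · simp only [hzdef]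
        rw [hyzero i hiS, hxzero i hiS]
        ring
    refine ⟨t, htpos, ?_⟩
    funext i
    have hzi := hzall i
    simp only [hzdef] at hzi
    show y i = t * x i
    linarith
end

section
/- Let A, B be real n×n matrices satisfying: (c1) A is entrywise nonnegative, (c2) B_{ij} ≤ A_{ij} for all i ≠ j, and (c3) there exists an entrywise positive vector u with (B−A)u entrywise positive. Set μ = ρ((B−A)⁻¹A), ρ(A,B) = μ/(1+μ), and let Γ = G(A) ∪ G(B) if ρ(A,B) ≠ 0 and Γ = G(A) if ρ(A,B) = 0. Let J_1,…,J_p be the classes J of Γ such that (i) (ρ(A,B)B − A)_J is singular and (ii) every class K ≠ J of Γ with access to J in the reduced graph of Γ has (ρ(A,B)B − A)_K nonsingular, and for each i let x^i be an entrywise nonnegative vector in the nullspace of ρ(A,B)B − A with x^i_j > 0 exactly when j has access in Γ to some vertex of J_i. Then every entrywise nonnegative vector in the nullspace of ρ(A,B)B − A is a linear combination of x^1,…,x^p with nonnegative coefficients. -/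
open Matrix

section AuxLemmas

variable {n : ℕ}

private lemma comm_symm {Γ : Fin n → Fin n → Prop} {a b : Fin n}
    (h : Communicate Γ a b) : Communicate Γ b a := ⟨h.2, h.1⟩

private lemma comm_trans {Γ : Fin n → Fin n → Prop} {a b c : Fin n}
    (h1 : Communicate Γ a b) (h2 : Communicate Γ b c) : Communicate Γ a c :=
  ⟨h1.1.trans h2.1, h2.2.trans h1.2⟩

private lemma comm_refl (Γ : Fin n → Fin n → Prop) (a : Fin n) : Communicate Γ a a :=
  ⟨Relation.ReflTransGen.refl, Relation.ReflTransGen.refl⟩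

private lemma class_eq_of_mem {Γ : Fin n → Fin n → Prop} {C K : Finset (Fin n)}
    (hC : IsClass Γ C) (hK : IsClass Γ K) {w : Fin n} (hwC : w ∈ C) (hwK : w ∈ K) :
    C = K := by
  obtain ⟨v, hv⟩ := hC
  obtain ⟨u, hu⟩ := hK
  have hvw := (hv w).mp hwC
  have huw := (hu w).mp hwK
  ext z
  rw [hv z, hu z]
  constructor
  · intro h; exact comm_trans huw (comm_trans (comm_symm hvw) h)
  · intro h; exact comm_trans hvw (comm_trans (comm_symm huw) h)

/-- All members of a class have access to each other. -/
private lemma class_access {Γ : Fin n → Fin n → Prop} {C : Finset (Fin n)}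
    (hC : IsClass Γ C) {a b : Fin n} (ha : a ∈ C) (hb : b ∈ C) : Access Γ a b := by
  obtain ⟨v, hv⟩ := hC
  exact ((hv a).mp ha).2.trans ((hv b).mp hb).1

/-- Off-diagonal zeros in rows of the support complement. -/
private lemma zero_of_notmem_supp {M : Matrix (Fin n) (Fin n) ℝ}
    (hM2 : ∀ j k, j ≠ k → M j k ≤ 0)
    {y : Fin n → ℝ} (hy : ∀ j, 0 ≤ y j) (hMy : M.mulVec y = 0)
    {j k : Fin n} (hj : y j = 0) (hk : y k ≠ 0) : M j k = 0 := by
  have hjk : j ≠ k := by rintro rfl; exact hk hj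
  have hsum : ∑ l, M j l * y l = 0 := by
    have := congrFun hMy j
    simpa [Matrix.mulVec, dotProduct] using this
  have hterm : ∀ l ∈ Finset.univ, M j l * y l ≤ 0 := by
    intro l _
    by_cases hlj : l = j
    · subst hlj; simp [hj]
    · exact mul_nonpos_of_nonpos_of_nonneg (hM2 j l (Ne.symm (Ne.intro hlj))) (hy l)
  have := (Finset.sum_eq_zero_iff_of_nonpos hterm).mp hsum k (Finset.mem_univ k)
  rcases mul_eq_zero.mp this with h | h
  · exact h
  · exact absurd h hk

/-- The support of a nonnegative null vector is closed under access. -/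
private lemma supp_access_closed {Γ : Fin n → Fin n → Prop} {M : Matrix (Fin n) (Fin n) ℝ}
    (hM1 : ∀ j k, j ≠ k → (M j k = 0 ↔ ¬ Γ j k))
    (hM2 : ∀ j k, j ≠ k → M j k ≤ 0)
    {y : Fin n → ℝ} (hy : ∀ j, 0 ≤ y j) (hMy : M.mulVec y = 0)
    {j k : Fin n} (hacc : Access Γ j k) (hk : y k ≠ 0) : y j ≠ 0 := by
  induction hacc using Relation.ReflTransGen.head_induction_on with
  | refl => exact hk
  | head hstep _ ih =>
    rename_i a c _
    by_cases hac : a = c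
    · subst hac; exact ih
    · intro ha0
      have h0 : M a c = 0 := zero_of_notmem_supp hM2 hy hMy ha0 ih
      exact ((hM1 a c hac).mp h0) hstep

/-- Key structural lemma: the support of a nonzero nonnegative null vector of a
Z-matrix contains a distinguished singular class. -/
private lemma key_exists_class (Γ : Fin n → Fin n → Prop) (M : Matrix (Fin n) (Fin n) ℝ)
    (hM1 : ∀ j k, j ≠ k → (M j k = 0 ↔ ¬ Γ j k))
    (hM2 : ∀ j k, j ≠ k → M j k ≤ 0)
    (y : Fin n → ℝ) (hy : ∀ j, 0 ≤ y j) (hMy : M.mulVec y = 0) (hy0 : y ≠ 0) :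
    ∃ C : Finset (Fin n), IsClass Γ C ∧ (∀ w ∈ C, y w ≠ 0) ∧
      ¬ IsUnit (subm M C).det ∧
      ∀ K : Finset (Fin n), IsClass Γ K → K ≠ C →
        (∃ k ∈ K, ∃ v ∈ C, Access Γ k v) → IsUnit (subm M K).det := by
  classical
  set S : Finset (Fin n) := Finset.univ.filter (fun j => y j ≠ 0) with hSdef
  have hmemS : ∀ j, j ∈ S ↔ y j ≠ 0 := by intro j; simp [hSdef]
  have hSne : S.Nonempty := by
    obtain ⟨j, hj⟩ := Function.ne_iff.mp hy0
    exact ⟨j, (hmemS j).mpr hj⟩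
  -- Step 1: produce one singular class inside S.
  have step1 : ∃ C : Finset (Fin n), IsClass Γ C ∧ C ⊆ S ∧ ¬ IsUnit (subm M C).det := by
    set R : Fin n → Finset (Fin n) := fun j => S.filter (fun k => Access Γ j k) with hRdef
    obtain ⟨j0, hj0S, hj0min⟩ := S.exists_min_image (fun j => (R j).card) hSne
    set C : Finset (Fin n) := Finset.univ.filter (fun w => Communicate Γ j0 w) with hCdef
    have hmemC : ∀ w, w ∈ C ↔ Communicate Γ j0 w := by intro w; simp [hCdef]
    have hCclass : IsClass Γ C := ⟨j0, hmemC⟩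
    have hCsub : C ⊆ S := by
      intro w hw
      have hcomm := (hmemC w).mp hw
      exact (hmemS w).mpr (supp_access_closed hM1 hM2 hy hMy hcomm.2 ((hmemS j0).mp hj0S))
    have hj0C : j0 ∈ C := (hmemC j0).mpr (comm_refl Γ j0)
    -- off-block entries vanish
    have hblock : ∀ i ∈ C, ∀ k, y k ≠ 0 → k ∉ C → M i k = 0 := by
      intro i hiC k hk hkC
      by_contra hMik
      have hik : i ≠ k := by rintro rfl; exact hkC hiC
      have hΓik : Γ i k := by
        by_contra hg; exact hMik ((hM1 i k hik).mpr hg)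
      have haccj0k : Access Γ j0 k :=
        (((hmemC i).mp hiC).1).trans (Relation.ReflTransGen.single hΓik)
      have hkS : k ∈ S := (hmemS k).mpr hk
      have hsub : R k ⊆ R j0 := by
        intro m hm
        rw [hRdef] at hm ⊢
        simp only [Finset.mem_filter] at hm ⊢
        exact ⟨hm.1, haccj0k.trans hm.2⟩
      have hj0Rj0 : j0 ∈ R j0 := by
        rw [hRdef]; simp only [Finset.mem_filter]
        exact ⟨hj0S, Relation.ReflTransGen.refl⟩
      have hj0Rk : j0 ∉ R k := by
        rw [hRdef]; simp only [Finset.mem_filter]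
        rintro ⟨-, hkj0⟩
        exact hkC ((hmemC k).mpr ⟨haccj0k, hkj0⟩)
      have hlt : (R k).card < (R j0).card :=
        Finset.card_lt_card ⟨hsub, fun hcon => hj0Rk (hcon hj0Rj0)⟩
      exact absurd (hj0min k hkS) (not_le.mpr hlt)
    -- the restricted vector is a nonzero null vector of the principal submatrix
    have hdet : (subm M C).det = 0 := by
      rw [← Matrix.exists_mulVec_eq_zero_iff]
      refine ⟨fun i => y i.val, ?_, ?_⟩
      · intro h0
        have := congrFun h0 ⟨j0, hj0C⟩
        exact ((hmemS j0).mp (hCsub hj0C)) this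
      · funext i
        obtain ⟨iv, hiv⟩ := i
        have hfull : ∑ l, M iv l * y l = 0 := by
          have := congrFun hMy iv
          simpa [Matrix.mulVec, dotProduct] using this
        have hCsum : ∑ l ∈ C, M iv l * y l = ∑ l, M iv l * y l := by
          apply Finset.sum_subset (Finset.subset_univ C)
          intro l _ hl
          by_cases hyl : y l = 0
          · simp [hyl]
          · rw [hblock iv hiv l hyl hl, zero_mul]
        have : (subm M C).mulVec (fun i => y i.val) ⟨iv, hiv⟩
            = ∑ l : {i // i ∈ C}, M iv l.val * y l.val := by
          simp [subm, Matrix.mulVec, dotProduct, Matrix.submatrix]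
        rw [this]
        rw [← Finset.sum_coe_sort C (fun l => M iv l * y l)] at hCsum
        rw [hCsum, hfull]
        rfl
    exact ⟨C, hCclass, hCsub, by rw [hdet]; exact not_isUnit_zero⟩
  -- Step 2: take a singular class in S maximizing the size of its down-set.
  set Down : Finset (Fin n) → Finset (Fin n) :=
    fun C => Finset.univ.filter (fun k => ∃ v ∈ C, Access Γ v k) with hDdef
  set SC : Finset (Finset (Fin n)) :=
    S.powerset.filter (fun C => IsClass Γ C ∧ ¬ IsUnit (subm M C).det) with hSCdef
  have hmemSC : ∀ C, C ∈ SC ↔ (C ⊆ S ∧ IsClass Γ C ∧ ¬ IsUnit (subm M C).det) := by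
    intro C; simp [hSCdef, Finset.mem_powerset, and_assoc]
  have hSCne : SC.Nonempty := by
    obtain ⟨C, h1, h2, h3⟩ := step1
    exact ⟨C, (hmemSC C).mpr ⟨h2, h1, h3⟩⟩
  obtain ⟨Cs, hCsSC, hCsmax⟩ := SC.exists_max_image (fun C => (Down C).card) hSCne
  obtain ⟨hCsS, hCscl, hCsdet⟩ := (hmemSC Cs).mp hCsSC
  refine ⟨Cs, hCscl, fun w hw => (hmemS w).mp (hCsS hw), hCsdet, ?_⟩
  intro K hKcl hKne hKacc
  by_contra hKdet
  obtain ⟨k, hkK, v, hvCs, hkv⟩ := hKacc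
  -- K is inside S
  have hKS : K ⊆ S := by
    intro w hw
    have hwk : Access Γ w k := class_access hKcl hw hkK
    have hyv : y v ≠ 0 := (hmemS v).mp (hCsS hvCs)
    exact (hmemS w).mpr
      (supp_access_closed hM1 hM2 hy hMy (hwk.trans hkv) hyv)
  have hKSC : K ∈ SC := (hmemSC K).mpr ⟨hKS, hKcl, hKdet⟩
  -- Down Cs ⊂ Down K
  have hsub : Down Cs ⊆ Down K := by
    intro u hu
    rw [hDdef] at hu ⊢
    simp only [Finset.mem_filter, Finset.mem_univ, true_and] at hu ⊢
    obtain ⟨v', hv'Cs, hv'u⟩ := hu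
    exact ⟨k, hkK, (hkv.trans (class_access hCscl hvCs hv'Cs)).trans hv'u⟩
  have hkDK : k ∈ Down K := by
    rw [hDdef]
    simp only [Finset.mem_filter, Finset.mem_univ, true_and]
    exact ⟨k, hkK, Relation.ReflTransGen.refl⟩
  have hkDCs : k ∉ Down Cs := by
    rw [hDdef]
    simp only [Finset.mem_filter, Finset.mem_univ, true_and]
    rintro ⟨v', hv'Cs, hv'k⟩
    -- then k communicates with members of Cs, so k ∈ Cs, so Cs = K
    have hkv' : Access Γ k v' := hkv.trans (class_access hCscl hvCs hv'Cs)
    obtain ⟨v0, hv0⟩ := id hCscl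
    have hkCs : k ∈ Cs := (hv0 k).mpr
      (comm_trans ((hv0 v').mp hv'Cs) ⟨hv'k, hkv'⟩)
    exact hKne (class_eq_of_mem hKcl hCscl hkK hkCs)
  have hlt : (Down Cs).card < (Down K).card :=
    Finset.card_lt_card ⟨hsub, fun hcon => hkDCs (hcon hkDK)⟩
  exact absurd (hCsmax K hKSC) (not_le.mpr hlt)

end AuxLemmas

/-- If `J 1, …, J p` enumerate exactly the distinguished singular classes of
`Γ` with respect to `ρ(A,B)B − A`, and for each `i` the vector `x i` is a
nonnegative null vector of `ρ(A,B)B − A` whose support consists of the vertices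
having access in `Γ` to `J i`, then every nonnegative null vector of
`ρ(A,B)B − A` is a nonnegative linear combination of the `x i`. -/


theorem stmt_13 {n : ℕ} (A B : Matrix (Fin n) (Fin n) ℝ)
    (hc1 : ∀ i j, 0 ≤ A i j)
    (hc2 : ∀ i j, i ≠ j → B i j ≤ A i j)
    (hc3 : ∃ u : Fin n → ℝ, (∀ i, 0 < u i) ∧ ∀ i, 0 < (B - A).mulVec u i)
    (μ ρAB : ℝ) (hμ : μ = specRad ((B - A)⁻¹ * A)) (hρ : ρAB = μ / (1 + μ))
    (Γ : Fin n → Fin n → Prop)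
    (hΓ : Γ = if ρAB ≠ 0 then (fun j k => A j k ≠ 0 ∨ B j k ≠ 0)
              else (fun j k => A j k ≠ 0))
    (p : ℕ) (J : Fin p → Finset (Fin n)) (hJinj : Function.Injective J)
    (hJenum : ∀ C : Finset (Fin n),
      (IsClass Γ C ∧ ¬ IsUnit (subm (ρAB • B - A) C).det ∧
        ∀ K : Finset (Fin n), IsClass Γ K → K ≠ C →
          (∃ k ∈ K, ∃ v ∈ C, Access Γ k v) →
          IsUnit (subm (ρAB • B - A) K).det) ↔ (∃ i : Fin p, J i = C))
    (x : Fin p → Fin n → ℝ)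
    (hx : ∀ i : Fin p, (∀ j, 0 ≤ x i j) ∧ (ρAB • B - A).mulVec (x i) = 0 ∧
      ∀ j, (0 < x i j ↔ ∃ v ∈ J i, Access Γ j v)) :
    ∀ y : Fin n → ℝ, (∀ j, 0 ≤ y j) → (ρAB • B - A).mulVec y = 0 →
      ∃ c : Fin p → ℝ, (∀ i, 0 ≤ c i) ∧ y = ∑ i : Fin p, c i • x i := by
  classical
  -- Basic facts about ρAB
  have hμ0 : 0 ≤ μ := by
    rw [hμ]
    apply Real.sSup_nonneg
    rintro s ⟨z, -, rfl⟩
    exact norm_nonneg z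
  have hρ0 : 0 ≤ ρAB := by
    rw [hρ]; exact div_nonneg hμ0 (by linarith)
  have hρ1 : ρAB < 1 := by
    rw [hρ, div_lt_one (by linarith)]; linarith
  set M : Matrix (Fin n) (Fin n) ℝ := ρAB • B - A with hMdef
  have hMentry : ∀ j k, M j k = ρAB * B j k - A j k := by
    intro j k
    simp [hMdef, Matrix.sub_apply, Matrix.smul_apply, smul_eq_mul]
  have hM2 : ∀ j k, j ≠ k → M j k ≤ 0 := by
    intro j k hjk
    rw [hMentry]
    have h1 : ρAB * B j k ≤ ρAB * A j k :=
      mul_le_mul_of_nonneg_left (hc2 j k hjk) hρ0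
    nlinarith [hc1 j k]
  have hM1 : ∀ j k, j ≠ k → (M j k = 0 ↔ ¬ Γ j k) := by
    intro j k hjk
    rw [hMentry]
    by_cases hr : ρAB = 0
    · have hΓ' : Γ = fun j k => A j k ≠ 0 := by
        rw [hΓ, if_neg (not_not_intro hr)]
      rw [hΓ', hr]
      simp
    · have hΓ' : Γ = fun j k => A j k ≠ 0 ∨ B j k ≠ 0 := by
        rw [hΓ, if_pos hr]
      have hρpos : 0 < ρAB := lt_of_le_of_ne hρ0 (Ne.symm hr)
      rw [hΓ']
      simp only [not_or, not_not]
      constructor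
      · intro h
        have hBA := hc2 j k hjk
        have hA0 : A j k ≤ 0 := by nlinarith [hc1 j k]
        have hA : A j k = 0 := le_antisymm hA0 (hc1 j k)
        have hB : B j k = 0 := by
          have : ρAB * B j k = 0 := by linarith [h, hA]
          rcases mul_eq_zero.mp this with h' | h'
          · exact absurd h' hr
          · exact h'
        exact ⟨hA, hB⟩
      · rintro ⟨hA, hB⟩
        rw [hA, hB]; ring
  -- Main induction on the size of the support.
  have main : ∀ N : ℕ, ∀ y : Fin n → ℝ, (∀ j, 0 ≤ y j) → M.mulVec y = 0 →
      (Finset.univ.filter (fun j => y j ≠ 0)).card ≤ N →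
      ∃ c : Fin p → ℝ, (∀ i, 0 ≤ c i) ∧ y = ∑ i : Fin p, c i • x i := by
    intro N
    induction N with
    | zero =>
      intro y hy hMy hcard
      have hempty : (Finset.univ.filter (fun j => y j ≠ 0)) = ∅ :=
        Finset.card_eq_zero.mp (Nat.le_zero.mp hcard)
      have hyz : y = 0 := by
        funext j
        by_contra hj
        have : j ∈ Finset.univ.filter (fun j => y j ≠ 0) :=
          Finset.mem_filter.mpr ⟨Finset.mem_univ j, hj⟩
        rw [hempty] at this
        exact absurd this (Finset.notMem_empty j)
      refine ⟨0, fun i => le_rfl, ?_⟩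
      rw [hyz]
      simp
    | succ N ih =>
      intro y hy hMy hcard
      by_cases hy0 : y = 0
      · refine ⟨0, fun i => le_rfl, ?_⟩
        rw [hy0]; simp
      · obtain ⟨C, hCcl, hCsupp, hCdet, hCdist⟩ :=
          key_exists_class Γ M hM1 hM2 y hy hMy hy0
        obtain ⟨i, hJi⟩ := (hJenum C).mp ⟨hCcl, hCdet, hCdist⟩
        obtain ⟨hxnn, hxnull, hxsupp⟩ := hx i
        have hxpos : ∀ j, x i j ≠ 0 → 0 < x i j := fun j hj =>
          lt_of_le_of_ne (hxnn j) (Ne.symm hj)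
        -- support of x i is inside support of y
        have hxy : ∀ j, x i j ≠ 0 → y j ≠ 0 := by
          intro j hj
          obtain ⟨v, hvJ, hjv⟩ := (hxsupp j).mp (hxpos j hj)
          rw [hJi] at hvJ
          exact supp_access_closed hM1 hM2 hy hMy hjv (hCsupp v hvJ)
        set T : Finset (Fin n) := Finset.univ.filter (fun j => x i j ≠ 0) with hTdef
        have hmemT : ∀ j, j ∈ T ↔ x i j ≠ 0 := by intro j; simp [hTdef]
        have hTne : T.Nonempty := by
          obtain ⟨v0, hv0⟩ := hCcl
          have hv0C : v0 ∈ C := (hv0 v0).mpr (comm_refl Γ v0)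
          have : 0 < x i v0 := (hxsupp v0).mpr ⟨v0, hJi ▸ hv0C, Relation.ReflTransGen.refl⟩
          exact ⟨v0, (hmemT v0).mpr (ne_of_gt this)⟩
        obtain ⟨j0, hj0T, hj0min⟩ := T.exists_min_image (fun j => y j / x i j) hTne
        have hxj0 : 0 < x i j0 := hxpos j0 ((hmemT j0).mp hj0T)
        set t : ℝ := y j0 / x i j0 with htdef
        have ht0 : 0 ≤ t := div_nonneg (hy j0) hxj0.le
        set y' : Fin n → ℝ := fun j => y j - t * x i j with hy'def
        have hy'nn : ∀ j, 0 ≤ y' j := by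
          intro j
          by_cases hj : x i j = 0
          · simp [hy'def, hj]; exact hy j
          · have hjT : j ∈ T := (hmemT j).mpr hj
            have hxj : 0 < x i j := hxpos j hj
            have := hj0min j hjT
            have : t * x i j ≤ y j := by
              rw [← le_div_iff₀ hxj]; exact this
            simp only [hy'def]
            linarith
        have hy'eq : y' = y - t • x i := by
          funext j
          simp [hy'def, smul_eq_mul]
        have hMy' : M.mulVec y' = 0 := by
          rw [hy'eq, Matrix.mulVec_sub, Matrix.mulVec_smul, hMy, hxnull,
            smul_zero, sub_zero]
        have hy'j0 : y' j0 = 0 := by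
          simp only [hy'def, htdef]
          field_simp
          ring
        have hsub : (Finset.univ.filter (fun j => y' j ≠ 0)) ⊆
            (Finset.univ.filter (fun j => y j ≠ 0)).erase j0 := by
          intro j hj
          simp only [Finset.mem_filter, Finset.mem_univ, true_and] at hj
          rw [Finset.mem_erase]
          constructor
          · rintro rfl; exact hj hy'j0
          · simp only [Finset.mem_filter, Finset.mem_univ, true_and]
            by_cases hxij : x i j = 0
            · intro h0
              apply hj
              simp [hy'def, hxij, h0]
            · exact hxy j hxij
        have hj0mem : j0 ∈ Finset.univ.filter (fun j => y j ≠ 0) := by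
          simp only [Finset.mem_filter, Finset.mem_univ, true_and]
          exact hxy j0 ((hmemT j0).mp hj0T)
        have hcard' : (Finset.univ.filter (fun j => y' j ≠ 0)).card ≤ N := by
          have h1 := Finset.card_le_card hsub
          rw [Finset.card_erase_of_mem hj0mem] at h1
          omega
        obtain ⟨c', hc'nn, hc'eq⟩ := ih y' hy'nn hMy' hcard'
        refine ⟨fun i' => c' i' + if i' = i then t else 0, ?_, ?_⟩
        · intro i'
          have : (0:ℝ) ≤ if i' = i then t else 0 := by
            split <;> simp [ht0]
          exact add_nonneg (hc'nn i') this
        · have hsum : ∑ i' : Fin p, (c' i' + if i' = i then t else 0) • x i'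
              = (∑ i' : Fin p, c' i' • x i') + t • x i := by
            rw [← Fintype.sum_ite_eq' i (fun i' => t • x i')]
            rw [← Finset.sum_add_distrib]
            apply Finset.sum_congr rfl
            intro i' _
            rw [add_smul]
            congr 1
            split <;> simp
          rw [hsum, ← hc'eq, hy'eq]
          funext j
          simp
  intro y hy hMy
  exact main _ y hy hMy le_rfl
end

section
/- Let A, B be real n×n matrices satisfying: (c1) A is entrywise nonnegative, (c2) B_{ij} ≤ A_{ij} for all i ≠ j, and (c3) there exists an entrywise positive vector u with (B−A)u entrywise positive. Set ρ(A,B) = μ/(1+μ) where μ = ρ((B−A)⁻¹A), and let t be a real number with 0 < t < ρ(A,B). Suppose J is a class of the digraph G(tB − A) such that ρ(A,B) = μ_J/(1+μ_J) where μ_J = ρ((B_J − A_J)⁻¹ A_J), and let m = |J|. If s is the (unique) index with tB − A ∈ L_s, then s ≤ n−1 when m = n, and s < m when m < n. -/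
open Matrix

/-- `ρ_s(P)`: the maximum over index sets `J` of cardinality `s` of `ρ(P_J)`. -/
noncomputable def rhoS {n : ℕ} (P : Matrix (Fin n) (Fin n) ℝ) (s : ℕ) : ℝ :=
  sSup {r : ℝ | ∃ J : Finset (Fin n), J.card = s ∧ r = specRad (subm P J)}

/-- The Fiedler–Markham class `L_s`: `X ∈ L_s` iff `X = q•I − P` with `P ≥ 0`
and `ρ_s(P) ≤ q < ρ_{s+1}(P)` (for `s = 0`, `q < ρ_1(P)`; for `s = n`,
`ρ_{n+1}(P) = ∞` so only `ρ_n(P) ≤ q`). -/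
def MemL {n : ℕ} (s : ℕ) (X : Matrix (Fin n) (Fin n) ℝ) : Prop :=
  ∃ q : ℝ, ∃ P : Matrix (Fin n) (Fin n) ℝ, (∀ i j, 0 ≤ P i j) ∧ X = q • 1 - P ∧
    (if s = 0 then q < rhoS P 1
     else rhoS P s ≤ q ∧ (s = n ∨ q < rhoS P (s + 1)))

open Filter Topology

attribute [local instance] Matrix.linftyOpNormedRing Matrix.linftyOpNormedAlgebra

lemma ofReal_norm_eq_coe_nnnorm {E : Type*} [SeminormedAddGroup E] (a : E) :
    ENNReal.ofReal ‖a‖ = ‖a‖₊ := ENNReal.ofReal_eq_coe_nnreal _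

namespace Aux

variable {m : Type*} [Fintype m] [DecidableEq m]

noncomputable def Mc (M : Matrix m m ℝ) : Matrix m m ℂ := M.map (algebraMap ℝ ℂ)

lemma mc_pow (M : Matrix m m ℝ) (k : ℕ) : Mc (M ^ k) = (Mc M) ^ k := by
  simpa [Mc, RingHom.mapMatrix_apply] using map_pow ((algebraMap ℝ ℂ).mapMatrix) M k

lemma specRad_def (M : Matrix m m ℝ) :
    specRad M = sSup ((fun z : ℂ => ‖z‖) '' spectrum ℂ (Mc M)) := rfl

lemma mc_apply (M : Matrix m m ℝ) (i j : m) : Mc M i j = (M i j : ℂ) := rfl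

-- row sums and the linfty norm
lemma row_sum_le_norm (M : Matrix m m ℂ) (i : m) : ∑ j, ‖M i j‖ ≤ ‖M‖ := by
  rw [Matrix.linfty_opNorm_def]
  have : (∑ j, ‖M i j‖₊ : NNReal) ≤ Finset.univ.sup fun i => ∑ j, ‖M i j‖₊ :=
    Finset.le_sup (f := fun i => ∑ j, ‖M i j‖₊) (Finset.mem_univ i)
  calc ∑ j, ‖M i j‖ = ((∑ j, ‖M i j‖₊ : NNReal) : ℝ) := by push_cast; rfl
    _ ≤ _ := by exact_mod_cast this

lemma norm_le_of_row_sums (M : Matrix m m ℂ) {c : ℝ} (hc : 0 ≤ c)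
    (h : ∀ i, ∑ j, ‖M i j‖ ≤ c) : ‖M‖ ≤ c := by
  rw [Matrix.linfty_opNorm_def]
  have : (Finset.univ.sup fun i => ∑ j, ‖M i j‖₊) ≤ c.toNNReal := by
    refine Finset.sup_le fun i _ => ?_
    have := h i
    rw [← NNReal.coe_le_coe]
    rw [Real.coe_toNNReal _ hc]
    calc ((∑ j, ‖M i j‖₊ : NNReal) : ℝ) = ∑ j, ‖M i j‖ := by push_cast; rfl
      _ ≤ c := this
  calc ((Finset.univ.sup fun i => ∑ j, ‖M i j‖₊ : NNReal) : ℝ) ≤ (c.toNNReal : ℝ) := by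
        exact_mod_cast this
    _ = c := Real.coe_toNNReal _ hc

lemma entry_le_norm (M : Matrix m m ℝ) (i j : m) : |M i j| ≤ ‖Mc M‖ := by
  have h1 : |M i j| = ‖Mc M i j‖ := by
    simp [mc_apply, Complex.norm_real, Real.norm_eq_abs]
  rw [h1]
  calc ‖Mc M i j‖ ≤ ∑ j', ‖Mc M i j'‖ :=
        Finset.single_le_sum (fun j' _ => norm_nonneg _) (Finset.mem_univ j)
    _ ≤ ‖Mc M‖ := row_sum_le_norm _ i

variable [Nonempty m]

lemma bddAbove_absSpec (M : Matrix m m ℝ) :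
    BddAbove ((fun z : ℂ => ‖z‖) '' spectrum ℂ (Mc M)) := by
  refine ⟨‖Mc M‖, ?_⟩
  rintro r ⟨z, hz, rfl⟩
  simpa using spectrum.norm_le_norm_of_mem hz

lemma abs_le_specRad {M : Matrix m m ℝ} {z : ℂ} (hz : z ∈ spectrum ℂ (Mc M)) :
    ‖z‖ ≤ specRad M := le_csSup (bddAbove_absSpec M) ⟨z, hz, rfl⟩

lemma specRad_nonneg (M : Matrix m m ℝ) : 0 ≤ specRad M := by
  obtain ⟨z, hz⟩ := spectrum.nonempty (Mc M)
  exact (norm_nonneg z).trans (abs_le_specRad hz)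

lemma specRad_le {M : Matrix m m ℝ} {c : ℝ} (h : ∀ z ∈ spectrum ℂ (Mc M), ‖z‖ ≤ c) :
    specRad M ≤ c := by
  rw [specRad_def]
  exact csSup_le ((spectrum.nonempty (Mc M)).image _)
    (by rintro r ⟨z, hz, rfl⟩; exact h z hz)

lemma spectralRadius_le_ofReal {M : Matrix m m ℝ} {c : ℝ} (h : specRad M ≤ c) :
    spectralRadius ℂ (Mc M) ≤ ENNReal.ofReal c := by
  rw [spectralRadius]
  refine iSup₂_le fun z hz => ?_
  rw [← ofReal_norm_eq_coe_nnnorm]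
  refine ENNReal.ofReal_le_ofReal ?_
  exact (abs_le_specRad hz).trans h

lemma specRad_le_of_spectralRadius {M : Matrix m m ℝ} {c : ℝ} (hc : 0 ≤ c)
    (h : spectralRadius ℂ (Mc M) ≤ ENNReal.ofReal c) : specRad M ≤ c := by
  refine specRad_le fun z hz => ?_
  have h1 : (‖z‖₊ : ENNReal) ≤ spectralRadius ℂ (Mc M) :=
    le_iSup₂ (f := fun (z : ℂ) (_ : z ∈ spectrum ℂ (Mc M)) => (‖z‖₊ : ENNReal)) z hz
  have h2 := h1.trans h
  rw [← ofReal_norm_eq_coe_nnnorm, ENNReal.ofReal_le_ofReal_iff hc] at h2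
  exact h2

lemma specRad_le_of_subinv {K : Matrix m m ℝ} (hK : ∀ i j, 0 ≤ K i j)
    {x : m → ℝ} (hx : ∀ i, 0 < x i) {c : ℝ} (h : ∀ i, K.mulVec x i ≤ c * x i) :
    specRad K ≤ c := by
  have hc : 0 ≤ c := by
    obtain ⟨i⟩ := ‹Nonempty m›
    have h0 : 0 ≤ K.mulVec x i :=
      Finset.sum_nonneg fun j _ => mul_nonneg (hK i j) (hx j).le
    nlinarith [h i, hx i]
  set U : Matrix m m ℂ := Matrix.diagonal fun i => (x i : ℂ) with hU
  set V : Matrix m m ℂ := Matrix.diagonal fun i => ((x i : ℂ))⁻¹ with hV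
  have hxne : ∀ i, (x i : ℂ) ≠ 0 := fun i => by exact_mod_cast (hx i).ne'
  have hUV : U * V = 1 := by
    rw [hU, hV, Matrix.diagonal_mul_diagonal]
    convert Matrix.diagonal_one
    exact mul_inv_cancel₀ (hxne _)
  have hVU : V * U = 1 := by
    rw [hU, hV, Matrix.diagonal_mul_diagonal]
    convert Matrix.diagonal_one
    exact inv_mul_cancel₀ (hxne _)
  let u : (Matrix m m ℂ)ˣ := ⟨U, V, hUV, hVU⟩
  refine specRad_le fun z hz => ?_
  set W : Matrix m m ℂ := V * Mc K * U with hW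
  have hz' : z ∈ spectrum ℂ W := by
    have : spectrum ℂ ((↑u⁻¹ : Matrix m m ℂ) * Mc K * (↑u : Matrix m m ℂ)) = spectrum ℂ (Mc K) :=
      spectrum.units_conjugate' (a := Mc K) (u := u)
    have he : ((↑u⁻¹ : Matrix m m ℂ) * Mc K * (↑u : Matrix m m ℂ)) = W := rfl
    rw [he] at this
    rw [this]; exact hz
  have hnorm : ‖z‖ ≤ ‖W‖ := spectrum.norm_le_norm_of_mem hz'
  refine hnorm.trans (norm_le_of_row_sums _ hc fun i => ?_)
  have hent : ∀ j, W i j = ((x i : ℂ))⁻¹ * (K i j : ℂ) * (x j : ℂ) := by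
    intro j
    rw [hW, Matrix.mul_diagonal, Matrix.diagonal_mul, mc_apply]
  have hsum : ∀ j, ‖W i j‖ = (x i)⁻¹ * K i j * x j := by
    intro j
    rw [hent j]
    rw [norm_mul, norm_mul]
    rw [norm_inv]
    simp only [Complex.norm_real, Real.norm_eq_abs]
    rw [abs_of_pos (hx i), abs_of_nonneg (hK i j), abs_of_pos (hx j)]
  calc ∑ j, ‖W i j‖ = ∑ j, (x i)⁻¹ * (K i j * x j) := by
        refine Finset.sum_congr rfl fun j _ => ?_
        rw [hsum j]; ring
    _ = (x i)⁻¹ * K.mulVec x i := by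
        rw [← Finset.mul_sum]; rfl
    _ ≤ (x i)⁻¹ * (c * x i) := by
        have := h i
        have h0 : 0 ≤ (x i)⁻¹ := (inv_pos.2 (hx i)).le
        nlinarith
    _ = c := by rw [mul_comm ((x i)⁻¹), mul_assoc, mul_inv_cancel₀ (hx i).ne', mul_one]

lemma eventually_pow_norm_le {K : Matrix m m ℝ} {q r : ℝ} (h : specRad K ≤ q) (hqr : q < r) :
    ∀ᶠ k : ℕ in atTop, ‖Mc (K ^ k)‖ ≤ r ^ k := by
  have hq0 : 0 ≤ q := (specRad_nonneg K).trans h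
  have hr0 : 0 < r := lt_of_le_of_lt hq0 hqr
  have hsp : spectralRadius ℂ (Mc K) < ENNReal.ofReal r :=
    lt_of_le_of_lt (spectralRadius_le_ofReal h) ((ENNReal.ofReal_lt_ofReal_iff hr0).2 hqr)
  have hev := (spectrum.pow_nnnorm_pow_one_div_tendsto_nhds_spectralRadius
      (Mc K)).eventually_lt_const hsp
  filter_upwards [hev, eventually_ge_atTop 1] with k hk hk1
  have hkne : (k : ℝ) ≠ 0 := by positivity
  have h1 : ((‖(Mc K) ^ k‖₊ : ENNReal) ^ (1 / (k : ℝ))) ^ (k : ℝ) ≤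
      (ENNReal.ofReal r) ^ (k : ℝ) := ENNReal.rpow_le_rpow hk.le (by positivity)
  rw [← ENNReal.rpow_mul] at h1
  rw [one_div, inv_mul_cancel₀ hkne, ENNReal.rpow_one] at h1
  rw [ENNReal.rpow_natCast] at h1
  rw [← ENNReal.ofReal_pow hr0.le] at h1
  rw [← ofReal_norm_eq_coe_nnnorm, ENNReal.ofReal_le_ofReal_iff (by positivity)] at h1
  rw [mc_pow]
  exact h1


variable {m : Type*} [Fintype m] [DecidableEq m]

lemma pow_nonneg_entries {K : Matrix m m ℝ} (hK : ∀ i j, 0 ≤ K i j) (k : ℕ) :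
    ∀ i j, 0 ≤ (K ^ k) i j := by
  induction k with
  | zero =>
    intro i j
    by_cases h : i = j <;> simp [Matrix.one_apply, h]
  | succ k ih =>
    intro i j
    rw [pow_succ, Matrix.mul_apply]
    exact Finset.sum_nonneg fun l _ => mul_nonneg (ih i l) (hK l j)

lemma mulVec_mono {K : Matrix m m ℝ} (hK : ∀ i j, 0 ≤ K i j) {v w : m → ℝ}
    (h : ∀ i, v i ≤ w i) : ∀ i, K.mulVec v i ≤ K.mulVec w i := fun i =>
  Finset.sum_le_sum fun j _ => mul_le_mul_of_nonneg_left (h j) (hK i j)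

lemma mulVec_nonneg {K : Matrix m m ℝ} (hK : ∀ i j, 0 ≤ K i j) {v : m → ℝ}
    (h : ∀ i, 0 ≤ v i) : ∀ i, 0 ≤ K.mulVec v i := fun i =>
  Finset.sum_nonneg fun j _ => mul_nonneg (hK i j) (h j)

lemma single_le_mulVec {K : Matrix m m ℝ} (hK : ∀ i j, 0 ≤ K i j) {v : m → ℝ}
    (h : ∀ i, 0 ≤ v i) (i j : m) : K i j * v j ≤ K.mulVec v i :=
  Finset.single_le_sum (f := fun j => K i j * v j)
    (fun l _ => mul_nonneg (hK i l) (h l)) (Finset.mem_univ j)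

variable {m' : Type*} [Fintype m'] [DecidableEq m']

lemma pow_submatrix_le {K' : Matrix m' m' ℝ} (hK' : ∀ i j, 0 ≤ K' i j)
    (f : m → m') (hf : Function.Injective f) (k : ℕ) :
    ∀ i j, ((K'.submatrix f f) ^ k) i j ≤ (K' ^ k) (f i) (f j) := by
  induction k with
  | zero =>
    intro i j
    by_cases h : i = j <;> simp [Matrix.one_apply, h, hf.eq_iff]
  | succ k ih =>
    intro i j
    rw [pow_succ, pow_succ, Matrix.mul_apply, Matrix.mul_apply]
    have hsub : ∀ a b, 0 ≤ (K'.submatrix f f) a b := fun a b => hK' _ _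
    calc ∑ l, ((K'.submatrix f f) ^ k) i l * (K'.submatrix f f) l j
        ≤ ∑ l, (K' ^ k) (f i) (f l) * K' (f l) (f j) := by
          refine Finset.sum_le_sum fun l _ => ?_
          have h1 := ih i l
          have h3 : 0 ≤ K' (f l) (f j) := hK' _ _
          simpa [Matrix.submatrix_apply] using mul_le_mul_of_nonneg_right h1 h3
      _ = ∑ l' ∈ Finset.univ.image f, (K' ^ k) (f i) l' * K' l' (f j) := by
          rw [Finset.sum_image (fun a _ b _ h => hf h)]
      _ ≤ ∑ l' : m', (K' ^ k) (f i) l' * K' l' (f j) :=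
          Finset.sum_le_sum_of_subset_of_nonneg (Finset.subset_univ _)
            (fun l' _ _ => mul_nonneg (pow_nonneg_entries hK' k _ _) (hK' _ _))


section Mono
variable {m' : Type*} [Fintype m'] [DecidableEq m']

lemma specRad_submatrix_le [Nonempty m] {K' : Matrix m' m' ℝ} (hK' : ∀ i j, 0 ≤ K' i j)
    (f : m → m') (hf : Function.Injective f) :
    specRad (K'.submatrix f f) ≤ specRad K' := by
  have hm' : Nonempty m' := ⟨f (Classical.arbitrary m)⟩
  set K := K'.submatrix f f with hKdef
  have hKnn : ∀ i j, 0 ≤ K i j := fun i j => hK' _ _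
  have hnorm : ∀ k : ℕ, ‖Mc (K ^ k)‖ ≤ ‖Mc (K' ^ k)‖ := by
    intro k
    refine norm_le_of_row_sums _ (norm_nonneg _) fun i => ?_
    have habs : ∀ (M : Matrix m m ℝ) (hM : ∀ a b, 0 ≤ M a b) (a : m) (b : m),
        ‖Mc M a b‖ = M a b := fun M hM a b => by
      simp [mc_apply, Complex.norm_real, Real.norm_eq_abs, abs_of_nonneg (hM a b)]
    have habs' : ∀ (M : Matrix m' m' ℝ) (hM : ∀ a b, 0 ≤ M a b) (a : m') (b : m'),
        ‖Mc M a b‖ = M a b := fun M hM a b => by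
      simp [mc_apply, Complex.norm_real, Real.norm_eq_abs, abs_of_nonneg (hM a b)]
    calc ∑ j, ‖Mc (K ^ k) i j‖ = ∑ j, (K ^ k) i j := by
          refine Finset.sum_congr rfl fun j _ => habs _ (pow_nonneg_entries hKnn k) i j
      _ ≤ ∑ j, (K' ^ k) (f i) (f j) :=
          Finset.sum_le_sum fun j _ => pow_submatrix_le hK' f hf k i j
      _ = ∑ j' ∈ Finset.univ.image f, (K' ^ k) (f i) j' := by
          rw [Finset.sum_image (fun a _ b _ h => hf h)]
      _ ≤ ∑ j' : m', (K' ^ k) (f i) j' :=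
          Finset.sum_le_sum_of_subset_of_nonneg (Finset.subset_univ _)
            (fun j' _ _ => pow_nonneg_entries hK' k _ _)
      _ = ∑ j' : m', ‖Mc (K' ^ k) (f i) j'‖ := by
          refine Finset.sum_congr rfl fun j' _ =>
            (habs' _ (pow_nonneg_entries hK' k) (f i) j').symm
      _ ≤ ‖Mc (K' ^ k)‖ := row_sum_le_norm _ (f i)
  have tendA := spectrum.pow_nnnorm_pow_one_div_tendsto_nhds_spectralRadius (Mc K)
  have tendB := spectrum.pow_nnnorm_pow_one_div_tendsto_nhds_spectralRadius (Mc K')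
  have hle : spectralRadius ℂ (Mc K) ≤ spectralRadius ℂ (Mc K') := by
    refine le_of_tendsto_of_tendsto' tendA tendB fun k => ?_
    refine ENNReal.rpow_le_rpow ?_ (by positivity)
    have := hnorm k
    rw [mc_pow, mc_pow] at this
    exact_mod_cast this
  exact specRad_le_of_spectralRadius (specRad_nonneg K')
    (hle.trans (spectralRadius_le_ofReal le_rfl))

end Mono


lemma zmat_inverse [Nonempty m] {D : Matrix m m ℝ} (hZ : ∀ i j, i ≠ j → D i j ≤ 0)
    {x : m → ℝ} (hx : ∀ i, 0 < x i) (hD : ∀ i, 0 < D.mulVec x i) :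
    ∃ S : Matrix m m ℝ, D * S = 1 ∧ S * D = 1 ∧ (∀ i j, 0 ≤ S i j) := by
  classical
  obtain ⟨i₀⟩ := ‹Nonempty m›
  set d : ℝ := 1 + max 0 (Finset.univ.sup' ⟨i₀, Finset.mem_univ i₀⟩ fun i => D i i) with hd
  have hdpos : 0 < d := by
    have : (0:ℝ) ≤ max 0 (Finset.univ.sup' ⟨i₀, Finset.mem_univ i₀⟩ fun i => D i i) :=
      le_max_left _ _
    linarith
  have hdiag : ∀ i, D i i < d := fun i => by
    have h1 : D i i ≤ Finset.univ.sup' ⟨i₀, Finset.mem_univ i₀⟩ fun i => D i i :=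
      Finset.le_sup' (f := fun i => D i i) (Finset.mem_univ i)
    have h2 : (Finset.univ.sup' ⟨i₀, Finset.mem_univ i₀⟩ fun i => D i i) ≤
        max 0 (Finset.univ.sup' ⟨i₀, Finset.mem_univ i₀⟩ fun i => D i i) := le_max_right _ _
    linarith
  set E : Matrix m m ℝ := d • (1 : Matrix m m ℝ) - D with hE
  have hDE : D = d • (1 : Matrix m m ℝ) - E := by rw [hE]; abel
  have hEnn : ∀ i j, 0 ≤ E i j := by
    intro i j
    by_cases h : i = j
    · subst h
      simp only [hE, Matrix.sub_apply, Matrix.smul_apply, Matrix.one_apply_eq, smul_eq_mul,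
        mul_one]
      linarith [hdiag i]
    · simp only [hE, Matrix.sub_apply, Matrix.smul_apply, Matrix.one_apply_ne h, smul_eq_mul,
        mul_zero]
      linarith [hZ i j h]
  have hEx : ∀ i, E.mulVec x i = d * x i - D.mulVec x i := by
    intro i
    rw [hE, Matrix.sub_mulVec, Matrix.smul_mulVec, Matrix.one_mulVec]
    simp [Pi.smul_apply, smul_eq_mul]
  set c : ℝ := Finset.univ.sup' ⟨i₀, Finset.mem_univ i₀⟩ fun i => E.mulVec x i / (d * x i)
    with hc
  have hratio : ∀ i, E.mulVec x i ≤ c * (d * x i) := by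
    intro i
    have h1 : E.mulVec x i / (d * x i) ≤ c :=
      Finset.le_sup' (f := fun i => E.mulVec x i / (d * x i)) (Finset.mem_univ i)
    have h2 : 0 < d * x i := mul_pos hdpos (hx i)
    calc E.mulVec x i = E.mulVec x i / (d * x i) * (d * x i) := by rw [div_mul_cancel₀ _ h2.ne']
      _ ≤ c * (d * x i) := mul_le_mul_of_nonneg_right h1 h2.le
  have hc1 : c < 1 := by
    rw [hc]
    refine (Finset.sup'_lt_iff _).2 fun i _ => ?_
    have h2 : 0 < d * x i := mul_pos hdpos (hx i)
    rw [div_lt_one h2, hEx i]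
    linarith [hD i]
  have hc0 : 0 ≤ c := by
    have h1 : E.mulVec x i₀ / (d * x i₀) ≤ c :=
      Finset.le_sup' (f := fun i => E.mulVec x i / (d * x i)) (Finset.mem_univ i₀)
    have h2 : 0 ≤ E.mulVec x i₀ :=
      Finset.sum_nonneg fun j _ => mul_nonneg (hEnn i₀ j) (hx j).le
    have h3 : 0 < d * x i₀ := mul_pos hdpos (hx i₀)
    have := div_nonneg h2 h3.le
    linarith
  have hpow : ∀ k i, (E ^ k).mulVec x i ≤ (c * d) ^ k * x i := by
    intro k
    induction k with
    | zero => intro i; simp [Matrix.one_mulVec]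
    | succ k ih =>
      intro i
      rw [pow_succ', ← Matrix.mulVec_mulVec]
      have step1 : ∀ j, (E ^ k).mulVec x j ≤ ((c * d) ^ k • x) j := fun j => by
        simpa [Pi.smul_apply, smul_eq_mul] using ih j
      calc E.mulVec ((E ^ k).mulVec x) i
          ≤ E.mulVec ((c * d) ^ k • x) i :=
            Finset.sum_le_sum fun j _ =>
              mul_le_mul_of_nonneg_left (step1 j) (hEnn i j)
        _ = (c * d) ^ k * E.mulVec x i := by
            rw [Matrix.mulVec_smul]
            simp [Pi.smul_apply, smul_eq_mul]
        _ ≤ (c * d) ^ k * (c * (d * x i)) := by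
            have hcd : (0:ℝ) ≤ (c * d) ^ k := by positivity
            exact mul_le_mul_of_nonneg_left (hratio i) hcd
        _ = (c * d) ^ (k + 1) * x i := by ring
  have hentry : ∀ k i j, (E ^ k) i j ≤ (c * d) ^ k * x i / x j := by
    intro k i j
    have h1 : (E ^ k) i j * x j ≤ (E ^ k).mulVec x i :=
      Finset.single_le_sum (f := fun j => (E ^ k) i j * x j)
        (fun l _ => mul_nonneg (pow_nonneg_entries hEnn k i l) (hx l).le) (Finset.mem_univ j)
    rw [le_div_iff₀ (hx j)]
    exact h1.trans (hpow k i)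
  -- partial sums and telescoping
  set f : ℕ → Matrix m m ℝ := fun k => (d⁻¹) ^ k • E ^ k with hf
  set T : ℕ → Matrix m m ℝ := fun K => ∑ k ∈ Finset.range (K + 1), (d⁻¹) ^ (k + 1) • E ^ k
    with hT
  clear_value T f c E d
  have hscal : ∀ k : ℕ, (d⁻¹) ^ (k + 1) * d = (d⁻¹) ^ k := by
    intro k
    rw [pow_succ, mul_assoc, inv_mul_cancel₀ hdpos.ne', mul_one]
  have hDf : ∀ k : ℕ, D * ((d⁻¹) ^ (k + 1) • E ^ k) = f k - f (k + 1) := by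
    intro k
    have h1 : D * E ^ k = d • E ^ k - E ^ (k + 1) := by
      rw [hDE, Matrix.sub_mul, Matrix.smul_mul, Matrix.one_mul, ← pow_succ']
    rw [Matrix.mul_smul, h1, smul_sub, smul_smul, hscal k]
    simp [hf]
  have hfD : ∀ k : ℕ, ((d⁻¹) ^ (k + 1) • E ^ k) * D = f k - f (k + 1) := by
    intro k
    have h1 : E ^ k * D = d • E ^ k - E ^ (k + 1) := by
      rw [hDE, Matrix.mul_sub, Matrix.mul_smul, Matrix.mul_one, ← pow_succ]
    rw [Matrix.smul_mul, h1, smul_sub, smul_smul, hscal k]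
    simp [hf]
  have htel : ∀ K, D * T K = 1 - (d⁻¹) ^ (K + 1) • E ^ (K + 1) := by
    intro K
    rw [hT, Finset.mul_sum]
    calc ∑ k ∈ Finset.range (K + 1), D * ((d⁻¹) ^ (k + 1) • E ^ k)
        = ∑ k ∈ Finset.range (K + 1), (f k - f (k + 1)) :=
          Finset.sum_congr rfl fun k _ => hDf k
      _ = f 0 - f (K + 1) := Finset.sum_range_sub' f (K + 1)
      _ = 1 - (d⁻¹) ^ (K + 1) • E ^ (K + 1) := by rw [hf]; simp
  have htel' : ∀ K, T K * D = 1 - (d⁻¹) ^ (K + 1) • E ^ (K + 1) := by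
    intro K
    rw [hT, Finset.sum_mul]
    calc ∑ k ∈ Finset.range (K + 1), ((d⁻¹) ^ (k + 1) • E ^ k) * D
        = ∑ k ∈ Finset.range (K + 1), (f k - f (k + 1)) :=
          Finset.sum_congr rfl fun k _ => hfD k
      _ = f 0 - f (K + 1) := Finset.sum_range_sub' f (K + 1)
      _ = 1 - (d⁻¹) ^ (K + 1) • E ^ (K + 1) := by rw [hf]; simp
  -- entry bounds for T
  have hTapp : ∀ K i j, T K i j = ∑ k ∈ Finset.range (K + 1), (d⁻¹) ^ (k + 1) * (E ^ k) i j := by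
    intro K i j
    rw [hT]
    show (∑ k ∈ Finset.range (K + 1), (d⁻¹) ^ (k + 1) • E ^ k) i j = _
    rw [Matrix.sum_apply]
    exact Finset.sum_congr rfl fun k _ => by rw [Matrix.smul_apply, smul_eq_mul]
  have hTentry_nn : ∀ K i j, 0 ≤ T K i j := by
    intro K i j
    rw [hTapp]
    refine Finset.sum_nonneg fun k _ => ?_
    exact mul_nonneg (pow_nonneg (inv_nonneg.2 hdpos.le) _) (pow_nonneg_entries hEnn k i j)
  have hgeom : ∀ n : ℕ, ∑ k ∈ Finset.range n, c ^ k ≤ (1 - c)⁻¹ := by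
    intro n
    have h1c : (0:ℝ) < 1 - c := by linarith
    have heq : ∑ k ∈ Finset.range n, c ^ k = (1 - c ^ n) / (1 - c) := by
      rw [geom_sum_eq hc1.ne n]
      rw [← neg_sub (1:ℝ) (c ^ n), ← neg_sub (1:ℝ) c, neg_div_neg_eq]
    rw [heq, div_le_iff₀ h1c, inv_mul_cancel₀ h1c.ne']
    nlinarith [pow_nonneg hc0 n]
  have hTbound : ∀ K i j, T K i j ≤ d⁻¹ * (x i / x j) * (1 - c)⁻¹ := by
    intro K i j
    rw [hTapp]
    have hstep : ∀ k, (d⁻¹) ^ (k + 1) * (E ^ k) i j ≤ d⁻¹ * (x i / x j) * c ^ k := by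
      intro k
      have h1 : (E ^ k) i j ≤ (c * d) ^ k * x i / x j := hentry k i j
      have h2 : (0:ℝ) ≤ (d⁻¹) ^ (k + 1) := pow_nonneg (inv_nonneg.2 hdpos.le) _
      calc (d⁻¹) ^ (k + 1) * (E ^ k) i j ≤ (d⁻¹) ^ (k + 1) * ((c * d) ^ k * x i / x j) :=
            mul_le_mul_of_nonneg_left h1 h2
        _ = d⁻¹ * (x i / x j) * c ^ k * ((d⁻¹ * d) ^ k) := by ring
        _ = d⁻¹ * (x i / x j) * c ^ k := by rw [inv_mul_cancel₀ hdpos.ne']; simp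
    calc ∑ k ∈ Finset.range (K + 1), (d⁻¹) ^ (k + 1) * (E ^ k) i j
        ≤ ∑ k ∈ Finset.range (K + 1), d⁻¹ * (x i / x j) * c ^ k :=
          Finset.sum_le_sum fun k _ => hstep k
      _ = d⁻¹ * (x i / x j) * ∑ k ∈ Finset.range (K + 1), c ^ k := by rw [Finset.mul_sum]
      _ ≤ d⁻¹ * (x i / x j) * (1 - c)⁻¹ := by
          have : (0:ℝ) ≤ d⁻¹ * (x i / x j) :=
            mul_nonneg (inv_nonneg.2 hdpos.le) (div_nonneg (hx i).le (hx j).le)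
          exact mul_le_mul_of_nonneg_left (hgeom (K + 1)) this
  have hTmono : ∀ i j, Monotone fun K => T K i j := by
    intro i j
    refine monotone_nat_of_le_succ fun K => ?_
    rw [hTapp, hTapp]
    rw [Finset.sum_range_succ (fun k => (d⁻¹) ^ (k + 1) * (E ^ k) i j) (K + 1)]
    have : 0 ≤ (d⁻¹) ^ (K + 1 + 1) * (E ^ (K + 1)) i j :=
      mul_nonneg (pow_nonneg (inv_nonneg.2 hdpos.le) _) (pow_nonneg_entries hEnn _ i j)
    linarith
  set S : Matrix m m ℝ := Matrix.of fun i j => ⨆ K, T K i j with hS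
  have htendS : ∀ i j, Tendsto (fun K => T K i j) atTop (𝓝 (S i j)) := by
    intro i j
    refine tendsto_atTop_ciSup (hTmono i j) ⟨d⁻¹ * (x i / x j) * (1 - c)⁻¹, ?_⟩
    rintro r ⟨K, rfl⟩
    exact hTbound K i j
  have hremlim : ∀ i j, Tendsto (fun K : ℕ => ((d⁻¹) ^ (K + 1) • E ^ (K + 1) : Matrix m m ℝ) i j)
      atTop (𝓝 0) := by
    intro i j
    have hub : ∀ K : ℕ, ((d⁻¹) ^ (K + 1) • E ^ (K + 1) : Matrix m m ℝ) i j ≤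
        c ^ (K + 1) * (x i / x j) := by
      intro K
      rw [Matrix.smul_apply, smul_eq_mul]
      calc (d⁻¹) ^ (K + 1) * (E ^ (K + 1)) i j
          ≤ (d⁻¹) ^ (K + 1) * ((c * d) ^ (K + 1) * x i / x j) :=
            mul_le_mul_of_nonneg_left (hentry (K + 1) i j)
              (pow_nonneg (inv_nonneg.2 hdpos.le) _)
        _ = c ^ (K + 1) * (x i / x j) * ((d⁻¹ * d) ^ (K + 1)) := by ring
        _ = c ^ (K + 1) * (x i / x j) := by rw [inv_mul_cancel₀ hdpos.ne']; simp
    have hlb : ∀ K : ℕ, 0 ≤ ((d⁻¹) ^ (K + 1) • E ^ (K + 1) : Matrix m m ℝ) i j := by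
      intro K
      rw [Matrix.smul_apply, smul_eq_mul]
      exact mul_nonneg (pow_nonneg (inv_nonneg.2 hdpos.le) _) (pow_nonneg_entries hEnn _ i j)
    have hgl : Tendsto (fun K : ℕ => c ^ (K + 1) * (x i / x j)) atTop (𝓝 0) := by
      have h1 : Tendsto (fun K : ℕ => c ^ (K + 1)) atTop (𝓝 0) :=
        (tendsto_pow_atTop_nhds_zero_of_lt_one hc0 hc1).comp (tendsto_add_atTop_nat 1)
      simpa using h1.mul_const (x i / x j)
    exact squeeze_zero hlb hub hgl
  refine ⟨S, ?_, ?_, ?_⟩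
  · ext i j
    have ht1 : Tendsto (fun K => (D * T K) i j) atTop (𝓝 ((D * S) i j)) := by
      have : ∀ K, (D * T K) i j = ∑ l, D i l * T K l j := fun K => Matrix.mul_apply
      simp only [this, Matrix.mul_apply]
      exact tendsto_finset_sum _ fun l _ => (htendS l j).const_mul (D i l)
    have ht2 : Tendsto (fun K => (D * T K) i j) atTop (𝓝 ((1 : Matrix m m ℝ) i j)) := by
      have heq : ∀ K, (D * T K) i j =
          (1 : Matrix m m ℝ) i j - ((d⁻¹) ^ (K + 1) • E ^ (K + 1) : Matrix m m ℝ) i j := by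
        intro K
        rw [htel K, Matrix.sub_apply]
      simp only [heq]
      simpa using (tendsto_const_nhds (x := (1 : Matrix m m ℝ) i j)).sub (hremlim i j)
    exact tendsto_nhds_unique ht1 ht2
  · ext i j
    have ht1 : Tendsto (fun K => (T K * D) i j) atTop (𝓝 ((S * D) i j)) := by
      have : ∀ K, (T K * D) i j = ∑ l, T K i l * D l j := fun K => Matrix.mul_apply
      simp only [this, Matrix.mul_apply]
      exact tendsto_finset_sum _ fun l _ => (htendS i l).mul_const (D l j)
    have ht2 : Tendsto (fun K => (T K * D) i j) atTop (𝓝 ((1 : Matrix m m ℝ) i j)) := by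
      have heq : ∀ K, (T K * D) i j =
          (1 : Matrix m m ℝ) i j - ((d⁻¹) ^ (K + 1) • E ^ (K + 1) : Matrix m m ℝ) i j := by
        intro K
        rw [htel' K, Matrix.sub_apply]
      simp only [heq]
      simpa using (tendsto_const_nhds (x := (1 : Matrix m m ℝ) i j)).sub (hremlim i j)
    exact tendsto_nhds_unique ht1 ht2
  · intro i j
    exact ge_of_tendsto' (htendS i j) fun K => hTentry_nn K i j




lemma pow_mulVec_le {Q : Matrix m m ℝ} (hQ : ∀ i j, 0 ≤ Q i j) {x : m → ℝ}
    (hx : ∀ i, 0 ≤ x i) {β : ℝ} (hβ : 0 ≤ β) (h : ∀ i, Q.mulVec x i ≤ β * x i) :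
    ∀ k i, (Q ^ k).mulVec x i ≤ β ^ k * x i := by
  intro k
  induction k with
  | zero => intro i; simp [Matrix.one_mulVec]
  | succ k ih =>
    intro i
    rw [pow_succ', ← Matrix.mulVec_mulVec]
    have step1 : ∀ j, (Q ^ k).mulVec x j ≤ (β ^ k • x) j := fun j => by
      simpa [Pi.smul_apply, smul_eq_mul] using ih j
    calc Q.mulVec ((Q ^ k).mulVec x) i
        ≤ Q.mulVec (β ^ k • x) i :=
          Finset.sum_le_sum fun j _ => mul_le_mul_of_nonneg_left (step1 j) (hQ i j)
      _ = β ^ k * Q.mulVec x i := by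
          rw [Matrix.mulVec_smul]
          simp [Pi.smul_apply, smul_eq_mul]
      _ ≤ β ^ k * (β * x i) := mul_le_mul_of_nonneg_left (h i) (pow_nonneg hβ k)
      _ = β ^ (k + 1) * x i := by ring
lemma mulVec_finsum (M : Matrix m m ℝ) (s : Finset ℕ) (v : ℕ → m → ℝ) :
    M.mulVec (∑ k ∈ s, v k) = ∑ k ∈ s, M.mulVec (v k) := by
  ext i
  rw [Finset.sum_apply]
  rw [Matrix.mulVec, dotProduct]
  simp only [Finset.sum_apply, Finset.mul_sum]
  rw [Finset.sum_comm]
  rfl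

lemma mul_nonneg_entries {M N : Matrix m m ℝ} (hM : ∀ i j, 0 ≤ M i j)
    (hN : ∀ i j, 0 ≤ N i j) : ∀ i j, 0 ≤ (M * N) i j := fun i j => by
  rw [Matrix.mul_apply]
  exact Finset.sum_nonneg fun l _ => mul_nonneg (hM i l) (hN l j)


end Aux




set_option maxHeartbeats 2000000 in
open Aux in
lemma key_contradiction {n : ℕ} {A B P : Matrix (Fin n) (Fin n) ℝ} {J : Finset (Fin n)}
    {u : Fin n → ℝ} {t q μJ : ℝ} {v : Fin n}
    (hc1 : ∀ i j, 0 ≤ A i j)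
    (hc2 : ∀ i j, i ≠ j → B i j ≤ A i j)
    (hu : ∀ i, 0 < u i) (hBAu : ∀ i, 0 < (B - A).mulVec u i)
    (ht0 : 0 < t)
    (hv : ∀ w, w ∈ J ↔ Communicate (edgeRel (t • B - A)) v w)
    (hμJ : μJ = specRad ((subm B J - subm A J)⁻¹ * subm A J))
    (htμ : t * (1 + μJ) < μJ)
    (hP : ∀ i j, 0 ≤ P i j)
    (hXP : t • B - A = q • (1 : Matrix (Fin n) (Fin n) ℝ) - P)
    (hPJ : specRad (subm P J) ≤ q) : False := by
  classical
  have hvJ : v ∈ J := (hv v).2 ⟨Relation.ReflTransGen.refl, Relation.ReflTransGen.refl⟩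
  haveI hne : Nonempty {i : Fin n // i ∈ J} := ⟨⟨v, hvJ⟩⟩
  set A₀ : Matrix {i : Fin n // i ∈ J} {i : Fin n // i ∈ J} ℝ := subm A J with hA₀def
  set B₀ : Matrix {i : Fin n // i ∈ J} {i : Fin n // i ∈ J} ℝ := subm B J with hB₀def
  set P₀ : Matrix {i : Fin n // i ∈ J} {i : Fin n // i ∈ J} ℝ := subm P J with hP₀def
  set D : Matrix {i : Fin n // i ∈ J} {i : Fin n // i ∈ J} ℝ := B₀ - A₀ with hDdef
  set u₀ : {i : Fin n // i ∈ J} → ℝ := fun a => u a.1 with hu₀def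
  have hA₀ : ∀ a b, 0 ≤ A₀ a b := fun a b => hc1 _ _
  have hP₀ : ∀ a b, 0 ≤ P₀ a b := fun a b => hP _ _
  have hu₀ : ∀ a, 0 < u₀ a := fun a => hu _
  have hDab : ∀ a b, D a b = (B - A) a.1 b.1 := fun a b => by
    simp [hDdef, hA₀def, hB₀def, subm, Matrix.sub_apply, Matrix.submatrix_apply]
  -- restricted matrix identity
  have hsubC : q • (1 : Matrix {i : Fin n // i ∈ J} {i : Fin n // i ∈ J} ℝ) - P₀
      = t • B₀ - A₀ := by
    ext a b
    have h := congrFun (congrFun hXP a.1) b.1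
    have hone : (1 : Matrix {i : Fin n // i ∈ J} {i : Fin n // i ∈ J} ℝ) a b
        = (1 : Matrix (Fin n) (Fin n) ℝ) a.1 b.1 := by
      by_cases hab : a = b
      · subst hab; simp
      · rw [Matrix.one_apply_ne hab, Matrix.one_apply_ne fun hh => hab (Subtype.ext hh)]
    simp only [Matrix.sub_apply, Matrix.smul_apply, smul_eq_mul] at h ⊢
    rw [hone]
    simpa [hA₀def, hB₀def, hP₀def, subm, Matrix.submatrix_apply] using h.symm
  -- D is a Z-matrix dominated by u₀
  have hZD : ∀ a b, a ≠ b → D a b ≤ 0 := by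
    intro a b hab
    rw [hDab]
    have h := hc2 a.1 b.1 fun hh => hab (Subtype.ext hh)
    simp [Matrix.sub_apply]; linarith
  have hDu0 : ∀ a, 0 < D.mulVec u₀ a := by
    intro a
    have hsum : D.mulVec u₀ a = ∑ j ∈ J, (B - A) a.1 j * u j := by
      rw [Matrix.mulVec, dotProduct]
      rw [← Finset.sum_coe_sort J (fun j => (B - A) a.1 j * u j)]
      exact Finset.sum_congr rfl fun b _ => by rw [hDab]
    have hfull : (B - A).mulVec u a.1
        = ∑ j ∈ Finset.univ \ J, (B - A) a.1 j * u j + ∑ j ∈ J, (B - A) a.1 j * u j := by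
      rw [Matrix.mulVec, dotProduct, ← Finset.sum_sdiff (Finset.subset_univ J)]
    have hneg : ∑ j ∈ Finset.univ \ J, (B - A) a.1 j * u j ≤ 0 := by
      refine Finset.sum_nonpos fun j hj => ?_
      have hjJ : j ∉ J := (Finset.mem_sdiff.1 hj).2
      have hne2 : a.1 ≠ j := fun hh => hjJ (hh ▸ a.2)
      have h2 : (B - A) a.1 j ≤ 0 := by
        have := hc2 a.1 j hne2; simp [Matrix.sub_apply]; linarith
      exact mul_nonpos_of_nonpos_of_nonneg h2 (hu j).le
    have := hBAu a.1
    rw [hsum]; rw [hfull] at this; linarith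
  -- invert D
  obtain ⟨S, hDS, hSD, hSnn⟩ := Aux.zmat_inverse hZD hu₀ hDu0
  have hDinv : (B₀ - A₀)⁻¹ = S := Matrix.inv_eq_right_inv hDS
  set N : Matrix {i : Fin n // i ∈ J} {i : Fin n // i ∈ J} ℝ := S * A₀ with hNdef
  have hμJN : μJ = specRad N := by rw [hμJ, hDinv]
  have hNnn : ∀ a b, 0 ≤ N a b := mul_nonneg_entries hSnn hA₀
  have hμJ0 : 0 ≤ μJ := by rw [hμJN]; exact Aux.specRad_nonneg N
  have ht1' : t < 1 := by nlinarith
  have htlt : t < (1 - t) * μJ := by nlinarith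
  obtain ⟨δ, hδpos, hδsum⟩ : ∃ δ : ℝ, 0 < δ ∧ 2 * δ = (1 - t) * μJ - t :=
    ⟨((1 - t) * μJ - t) / 2, by linarith, by ring⟩
  have hq0 : 0 ≤ q := le_trans (Aux.specRad_nonneg P₀) hPJ
  -- the vector w and its lower bound γ
  set w : {i : Fin n // i ∈ J} → ℝ := D.mulVec u₀ with hwdef
  have hw : ∀ a, 0 < w a := hDu0
  obtain ⟨γ, hγpos, hγle⟩ : ∃ γ : ℝ, 0 < γ ∧ ∀ a, γ ≤ w a :=
    ⟨Finset.univ.inf' Finset.univ_nonempty w, (Finset.lt_inf'_iff _).2 fun a _ => hw a,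
      fun a => Finset.inf'_le _ (Finset.mem_univ a)⟩
  have hSw : S.mulVec w = u₀ := by
    rw [hwdef, Matrix.mulVec_mulVec, hSD, Matrix.one_mulVec]
  have hrowS : ∀ a, γ * (∑ b, S a b) ≤ u₀ a := by
    intro a
    have h1 : ∑ b, S a b * γ ≤ ∑ b, S a b * w b :=
      Finset.sum_le_sum fun b _ => mul_le_mul_of_nonneg_left (hγle b) (hSnn a b)
    have h2 : ∑ b, S a b * w b = u₀ a := by rw [← hSw]; rfl
    calc γ * ∑ b, S a b = ∑ b, S a b * γ := by
          rw [Finset.mul_sum]; exact Finset.sum_congr rfl fun b _ => mul_comm _ _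
      _ ≤ u₀ a := h2 ▸ h1
  -- the reachability matrix
  set Q : Matrix {i : Fin n // i ∈ J} {i : Fin n // i ∈ J} ℝ := 1 + P₀ with hQdef
  have hQnn : ∀ a b, 0 ≤ Q a b := by
    intro a b
    by_cases hab : a = b
    · subst hab
      simp only [hQdef, Matrix.add_apply, Matrix.one_apply_eq]
      linarith [hP₀ a a]
    · simp only [hQdef, Matrix.add_apply, Matrix.one_apply_ne hab, zero_add]
      exact hP₀ a b
  have hQdiag : ∀ a, 1 ≤ Q a a := fun a => by
    simp only [hQdef, Matrix.add_apply, Matrix.one_apply_eq]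
    linarith [hP₀ a a]
  have hPedge : ∀ (i j : Fin n), i ≠ j → edgeRel (t • B - A) i j → 0 < P i j := by
    intro i j hij he
    have h := congrFun (congrFun hXP i) j
    simp only [Matrix.sub_apply, Matrix.smul_apply, Matrix.one_apply_ne hij, smul_eq_mul,
      mul_zero] at h
    refine lt_of_le_of_ne (hP i j) (Ne.symm ?_)
    intro h0
    apply he
    show (t • B - A) i j = 0
    rw [Matrix.sub_apply, Matrix.smul_apply, smul_eq_mul]
    rw [h0] at h
    linarith
  have hreach0 : ∀ (i j : Fin n), Access (edgeRel (t • B - A)) i j →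
      ∀ (hi : i ∈ J) (hj : j ∈ J), ∃ k, 0 < (Q ^ k) ⟨i, hi⟩ ⟨j, hj⟩ := by
    intro i j hacc
    induction hacc with
    | refl =>
      intro hi hj
      exact ⟨0, by simp [Matrix.one_apply]⟩
    | @tail b c hab hbc ih =>
      intro hi hj
      have hvb : Access (edgeRel (t • B - A)) v b := Relation.ReflTransGen.trans ((hv i).1 hi).1 hab
      have hbv : Access (edgeRel (t • B - A)) b v :=
        Relation.ReflTransGen.trans (Relation.ReflTransGen.single hbc) ((hv c).1 hj).2
      have hbJ : b ∈ J := (hv b).2 ⟨hvb, hbv⟩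
      obtain ⟨k, hk⟩ := ih hi hbJ
      refine ⟨k + 1, ?_⟩
      have hQbc : 0 < Q ⟨b, hbJ⟩ ⟨c, hj⟩ := by
        by_cases hbc' : b = c
        · subst hbc'
          exact lt_of_lt_of_le one_pos (hQdiag _)
        · have : (0:ℝ) < P₀ ⟨b, hbJ⟩ ⟨c, hj⟩ := hPedge b c hbc' hbc
          calc (0:ℝ) < P₀ ⟨b, hbJ⟩ ⟨c, hj⟩ := this
            _ ≤ Q ⟨b, hbJ⟩ ⟨c, hj⟩ := by
              simp only [hQdef, Matrix.add_apply,
                Matrix.one_apply_ne fun hh => hbc' (Subtype.mk_eq_mk.1 hh)]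
              linarith
      rw [pow_succ, Matrix.mul_apply]
      have hterm : 0 < (Q ^ k) ⟨i, hi⟩ ⟨b, hbJ⟩ * Q ⟨b, hbJ⟩ ⟨c, hj⟩ := mul_pos hk hQbc
      have hle : (Q ^ k) ⟨i, hi⟩ ⟨b, hbJ⟩ * Q ⟨b, hbJ⟩ ⟨c, hj⟩
          ≤ ∑ l, (Q ^ k) ⟨i, hi⟩ l * Q l ⟨c, hj⟩ :=
        Finset.single_le_sum (f := fun l => (Q ^ k) ⟨i, hi⟩ l * Q l ⟨c, hj⟩)
          (fun l _ => mul_nonneg (pow_nonneg_entries hQnn k _ _) (hQnn _ _))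
          (Finset.mem_univ (⟨b, hbJ⟩ : {i : Fin n // i ∈ J}))
      linarith
  have hreach : ∀ a b : {i : Fin n // i ∈ J}, ∃ k, 0 < (Q ^ k) a b := by
    intro a b
    have hacc : Access (edgeRel (t • B - A)) a.1 b.1 :=
      Relation.ReflTransGen.trans ((hv a.1).1 a.2).2 ((hv b.1).1 b.2).1
    obtain ⟨k, hk⟩ := hreach0 a.1 b.1 hacc a.2 b.2
    exact ⟨k, hk⟩
  have hQmono : ∀ (a b : {i : Fin n // i ∈ J}), Monotone fun k => (Q ^ k) a b := by
    intro a b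
    refine monotone_nat_of_le_succ fun k => ?_
    rw [pow_succ, Matrix.mul_apply]
    have h1 : (Q ^ k) a b * 1 ≤ (Q ^ k) a b * Q b b :=
      mul_le_mul_of_nonneg_left (hQdiag b) (pow_nonneg_entries hQnn k a b)
    have h2 : (Q ^ k) a b * Q b b ≤ ∑ l, (Q ^ k) a l * Q l b :=
      Finset.single_le_sum (f := fun l => (Q ^ k) a l * Q l b)
        (fun l _ => mul_nonneg (pow_nonneg_entries hQnn k a l) (hQnn l b))
        (Finset.mem_univ b)
    calc (Q ^ k) a b = (Q ^ k) a b * 1 := (mul_one _).symm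
      _ ≤ ∑ l, (Q ^ k) a l * Q l b := le_trans h1 h2
  set K₀ : ℕ := Finset.univ.sup (fun p : {i : Fin n // i ∈ J} × {i : Fin n // i ∈ J} =>
    (hreach p.1 p.2).choose) with hK₀def
  set W : Matrix {i : Fin n // i ∈ J} {i : Fin n // i ∈ J} ℝ := Q ^ K₀ with hWdef
  have hWpos : ∀ a b, 0 < W a b := by
    intro a b
    have h1 := (hreach a b).choose_spec
    have h2 : (hreach a b).choose ≤ K₀ :=
      Finset.le_sup (f := fun p : {i : Fin n // i ∈ J} × {i : Fin n // i ∈ J} =>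
        (hreach p.1 p.2).choose) (Finset.mem_univ (a, b))
    exact lt_of_lt_of_le h1 (hQmono a b h2)
  obtain ⟨κ0, hκ0pos, hκ0le⟩ : ∃ κ0 : ℝ, 0 < κ0 ∧ ∀ a b, κ0 ≤ W a b :=
    ⟨Finset.univ.inf' Finset.univ_nonempty
        (fun p : {i : Fin n // i ∈ J} × {i : Fin n // i ∈ J} => W p.1 p.2),
      (Finset.lt_inf'_iff _).2 fun p _ => hWpos p.1 p.2,
      fun a b => Finset.inf'_le _ (Finset.mem_univ (a, b))⟩
  obtain ⟨umax, humaxpos, humax⟩ : ∃ umax : ℝ, 0 < umax ∧ ∀ a, u₀ a ≤ umax :=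
    ⟨Finset.univ.sup' Finset.univ_nonempty u₀,
      lt_of_lt_of_le (hu₀ (Classical.arbitrary _)) (Finset.le_sup' _ (Finset.mem_univ _)),
      fun a => Finset.le_sup' _ (Finset.mem_univ a)⟩
  set pq : ℝ := (2 + q) ^ K₀ with hpqdef
  have hpqpos : 0 < pq := by positivity
  -- ε
  obtain ⟨ε, hεpos, hε1, hεle⟩ :
      ∃ ε : ℝ, 0 < ε ∧ ε ≤ 1 ∧ ε * (pq * umax) ≤ δ * γ * κ0 := by
    refine ⟨min 1 (δ * γ * κ0 / (pq * umax)), lt_min one_pos ?_, min_le_left _ _, ?_⟩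
    · exact div_pos (mul_pos (mul_pos hδpos hγpos) hκ0pos) (mul_pos hpqpos humaxpos)
    · have h2 := min_le_right 1 (δ * γ * κ0 / (pq * umax))
      calc min 1 (δ * γ * κ0 / (pq * umax)) * (pq * umax)
          ≤ (δ * γ * κ0 / (pq * umax)) * (pq * umax) :=
            mul_le_mul_of_nonneg_right h2 (mul_pos hpqpos humaxpos).le
        _ = δ * γ * κ0 := by field_simp
  set β : ℝ := q + ε with hβdef
  have hβpos : 0 < β := by rw [hβdef]; linarith
  have hpqge : (1 + β) ^ K₀ ≤ pq := by
    rw [hpqdef]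
    exact pow_le_pow_left₀ (by rw [hβdef]; linarith) (by rw [hβdef]; linarith) K₀
  clear_value pq
  -- choose the cutoff K
  set r : ℝ := q + ε / 2 with hrdef
  have hqr : q < r := by rw [hrdef]; linarith
  have hrβ : r < β := by rw [hrdef, hβdef]; linarith
  have hr0 : (0:ℝ) ≤ r := by rw [hrdef]; linarith
  clear_value β r
  set wsum : ℝ := ∑ b, w b with hwsumdef
  have hwsumpos : 0 < wsum := by
    rw [hwsumdef]; exact Finset.sum_pos (fun b _ => hw b) Finset.univ_nonempty
  clear_value wsum
  have hev := Aux.eventually_pow_norm_le hPJ hqr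
  have hgl : Tendsto (fun k : ℕ => (r / β) ^ k * wsum) atTop (𝓝 0) := by
    have h1 : Tendsto (fun k : ℕ => (r / β) ^ k) atTop (𝓝 0) :=
      tendsto_pow_atTop_nhds_zero_of_lt_one (div_nonneg hr0 hβpos.le)
        ((div_lt_one hβpos).2 hrβ)
    simpa using h1.mul_const wsum
  have hev2 : ∀ᶠ k : ℕ in atTop, (r / β) ^ k * wsum < γ := hgl.eventually_lt_const hγpos
  obtain ⟨k₁, hk₁a, hk₁b, hk₁c⟩ := (hev.and (hev2.and (eventually_ge_atTop 1))).exists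
  obtain ⟨K, hK1⟩ : ∃ K : ℕ, K + 1 = k₁ := ⟨k₁ - 1, Nat.succ_pred_eq_of_pos hk₁c⟩
  -- the test vector x
  set x : {i : Fin n // i ∈ J} → ℝ :=
    ∑ k ∈ Finset.range (K + 1), (β⁻¹) ^ (k + 1) • (P₀ ^ k).mulVec w with hxdef
  set rem : {i : Fin n // i ∈ J} → ℝ :=
    (β⁻¹) ^ (K + 1) • (P₀ ^ (K + 1)).mulVec w with hremdef
  have hxa : ∀ a, x a = ∑ k ∈ Finset.range (K + 1), (β⁻¹) ^ (k + 1) * (P₀ ^ k).mulVec w a := by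
    intro a
    rw [hxdef, Finset.sum_apply]
    exact Finset.sum_congr rfl fun k _ => by simp [Pi.smul_apply, smul_eq_mul]
  have hrema : ∀ a, rem a = (β⁻¹) ^ (K + 1) * (P₀ ^ (K + 1)).mulVec w a := fun a => by
    rw [hremdef]; simp [Pi.smul_apply, smul_eq_mul]
  have hxpos : ∀ a, 0 < x a := by
    intro a
    rw [hxa]
    have hterm0 : 0 < (β⁻¹) ^ (0 + 1) * (P₀ ^ 0).mulVec w a := by
      rw [zero_add, pow_one, pow_zero, Matrix.one_mulVec]
      exact mul_pos (inv_pos.2 hβpos) (hw a)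
    refine lt_of_lt_of_le hterm0
      (Finset.single_le_sum
        (f := fun k => (β⁻¹) ^ (k + 1) * (P₀ ^ k).mulVec w a)
        (fun k _ => mul_nonneg (pow_nonneg (inv_nonneg.2 hβpos.le) _)
          (mulVec_nonneg (pow_nonneg_entries hP₀ k) (fun b => (hw b).le) a))
        (Finset.mem_range.2 (Nat.succ_pos K)))
  -- telescoping identity
  have hPxsum : ∀ a, P₀.mulVec x a
      = ∑ k ∈ Finset.range (K + 1), (β⁻¹) ^ (k + 1) * (P₀ ^ (k + 1)).mulVec w a := by
    intro a
    have h2 : P₀.mulVec x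
        = ∑ k ∈ Finset.range (K + 1), P₀.mulVec ((β⁻¹) ^ (k + 1) • (P₀ ^ k).mulVec w) := by
      rw [hxdef, mulVec_finsum]
    rw [h2, Finset.sum_apply]
    refine Finset.sum_congr rfl fun k _ => ?_
    rw [Matrix.mulVec_smul, Matrix.mulVec_mulVec, ← pow_succ']
    simp [Pi.smul_apply, smul_eq_mul]
  have hxid : ∀ a, β * x a - P₀.mulVec x a = w a - rem a := by
    intro a
    rw [hxa a, hPxsum a, Finset.mul_sum, ← Finset.sum_sub_distrib]
    have hterm : ∀ k, β * ((β⁻¹) ^ (k + 1) * (P₀ ^ k).mulVec w a)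
        - (β⁻¹) ^ (k + 1) * (P₀ ^ (k + 1)).mulVec w a
        = (β⁻¹) ^ k * (P₀ ^ k).mulVec w a
          - (β⁻¹) ^ (k + 1) * (P₀ ^ (k + 1)).mulVec w a := by
      intro k
      have hb : β * (β⁻¹) ^ (k + 1) = (β * β⁻¹) * (β⁻¹) ^ k := by rw [pow_succ]; ring
      rw [← mul_assoc, hb, mul_inv_cancel₀ hβpos.ne', one_mul]
    calc ∑ k ∈ Finset.range (K + 1), (β * ((β⁻¹) ^ (k + 1) * (P₀ ^ k).mulVec w a)
            - (β⁻¹) ^ (k + 1) * (P₀ ^ (k + 1)).mulVec w a)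
        = ∑ k ∈ Finset.range (K + 1), ((β⁻¹) ^ k * (P₀ ^ k).mulVec w a
            - (β⁻¹) ^ (k + 1) * (P₀ ^ (k + 1)).mulVec w a) :=
          Finset.sum_congr rfl fun k _ => hterm k
      _ = (β⁻¹) ^ 0 * (P₀ ^ 0).mulVec w a - (β⁻¹) ^ (K + 1) * (P₀ ^ (K + 1)).mulVec w a :=
          Finset.sum_range_sub' (fun k => (β⁻¹) ^ k * (P₀ ^ k).mulVec w a) (K + 1)
      _ = w a - rem a := by
          rw [hrema a, pow_zero, pow_zero, Matrix.one_mulVec, one_mul]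
  -- remainder bounds
  have hremle : ∀ a, rem a ≤ γ := by
    intro a
    have hnormb : ‖Mc (P₀ ^ (K + 1))‖ ≤ r ^ (K + 1) := by rw [hK1]; exact hk₁a
    have hmul : (P₀ ^ (K + 1)).mulVec w a ≤ r ^ (K + 1) * wsum := by
      have h1 : ∀ b, (P₀ ^ (K + 1)) a b * w b ≤ ‖Mc (P₀ ^ (K + 1))‖ * w b := fun b =>
        mul_le_mul_of_nonneg_right ((le_abs_self _).trans (Aux.entry_le_norm _ a b)) (hw b).le
      calc (P₀ ^ (K + 1)).mulVec w a = ∑ b, (P₀ ^ (K + 1)) a b * w b := rfl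
        _ ≤ ∑ b, ‖Mc (P₀ ^ (K + 1))‖ * w b := Finset.sum_le_sum fun b _ => h1 b
        _ = ‖Mc (P₀ ^ (K + 1))‖ * wsum := by rw [← Finset.mul_sum, hwsumdef]
        _ ≤ r ^ (K + 1) * wsum := mul_le_mul_of_nonneg_right hnormb hwsumpos.le
    have h0 : (0:ℝ) ≤ (β⁻¹) ^ (K + 1) := pow_nonneg (inv_nonneg.2 hβpos.le) _
    have h2 : rem a ≤ (β⁻¹) ^ (K + 1) * (r ^ (K + 1) * wsum) := by
      rw [hrema a]; exact mul_le_mul_of_nonneg_left hmul h0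
    have h3 : (β⁻¹) ^ (K + 1) * (r ^ (K + 1) * wsum) = (r / β) ^ (K + 1) * wsum := by
      rw [div_pow, division_def, ← inv_pow]; ring
    have h4 : (r / β) ^ (K + 1) * wsum < γ := by rw [hK1]; exact hk₁b
    linarith
  have hPxle : ∀ a, P₀.mulVec x a ≤ β * x a := by
    intro a
    have h1 := hxid a
    have h2 := hremle a
    have h3 := hγle a
    linarith
  clear_value rem
  -- comparability of the entries of x
  have hQx : ∀ a, Q.mulVec x a ≤ (1 + β) * x a := by
    intro a
    have h1 : Q.mulVec x a = x a + P₀.mulVec x a := by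
      rw [hQdef, Matrix.add_mulVec, Matrix.one_mulVec]; simp [Pi.add_apply]
    rw [h1]; have := hPxle a; linarith
  have hWx : ∀ a, W.mulVec x a ≤ (1 + β) ^ K₀ * x a := by
    intro a
    rw [hWdef]
    exact pow_mulVec_le hQnn (fun b => (hxpos b).le) (by linarith) hQx K₀ a
  have hxcomp : ∀ a b, κ0 * x b ≤ pq * x a := by
    intro a b
    have h1 : κ0 * x b ≤ W a b * x b := mul_le_mul_of_nonneg_right (hκ0le a b) (hxpos b).le
    have h2 : W a b * x b ≤ W.mulVec x a :=
      single_le_mulVec (fun i j => (hWpos i j).le) (fun c => (hxpos c).le) a b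
    have h3 : (1 + β) ^ K₀ * x a ≤ pq * x a :=
      mul_le_mul_of_nonneg_right hpqge (hxpos a).le
    linarith [hWx a]
  clear_value x
  obtain ⟨xmax, hxmax, hxmaxle⟩ : ∃ xmax : ℝ, (∀ b, x b ≤ xmax) ∧ ∀ a, κ0 * xmax ≤ pq * x a := by
    refine ⟨Finset.univ.sup' Finset.univ_nonempty x,
      fun b => Finset.le_sup' _ (Finset.mem_univ b), fun a => ?_⟩
    have h1 : Finset.univ.sup' Finset.univ_nonempty x ≤ pq * x a / κ0 :=
      Finset.sup'_le _ _ fun b _ =>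
        (le_div_iff₀ hκ0pos).2 (by rw [mul_comm]; exact hxcomp a b)
    calc κ0 * Finset.univ.sup' Finset.univ_nonempty x ≤ κ0 * (pq * x a / κ0) :=
        mul_le_mul_of_nonneg_left h1 hκ0pos.le
      _ = pq * x a := by field_simp
  have hxmax0 : (0:ℝ) ≤ xmax := le_trans (hxpos (Classical.arbitrary _)).le (hxmax _)
  -- bounds for S applied to x and rem
  have hSx : ∀ a, γ * S.mulVec x a ≤ xmax * u₀ a := by
    intro a
    have hEq : S.mulVec x a ≤ (∑ b, S a b) * xmax := by
      calc S.mulVec x a = ∑ b, S a b * x b := rfl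
        _ ≤ ∑ b, S a b * xmax :=
            Finset.sum_le_sum fun b _ => mul_le_mul_of_nonneg_left (hxmax b) (hSnn a b)
        _ = (∑ b, S a b) * xmax := by rw [Finset.sum_mul]
    calc γ * S.mulVec x a ≤ γ * ((∑ b, S a b) * xmax) :=
        mul_le_mul_of_nonneg_left hEq hγpos.le
      _ = (γ * ∑ b, S a b) * xmax := by ring
      _ ≤ u₀ a * xmax := mul_le_mul_of_nonneg_right (hrowS a) hxmax0
      _ = xmax * u₀ a := mul_comm _ _
  have hSrem : ∀ a, S.mulVec rem a ≤ u₀ a := by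
    intro a
    have h1 : S.mulVec rem a ≤ S.mulVec (fun _ => γ) a :=
      mulVec_mono hSnn (fun b => hremle b) a
    have h2 : S.mulVec (fun _ => γ) a = γ * ∑ b, S a b := by
      calc S.mulVec (fun _ => γ) a = ∑ b, S a b * γ := rfl
        _ = γ * ∑ b, S a b := by
            rw [Finset.mul_sum]; exact Finset.sum_congr rfl fun b _ => mul_comm _ _
    rw [h2] at h1
    linarith [hrowS a]
  -- the master identity after applying S
  have hCx : ∀ a, q * x a - P₀.mulVec x a = t * B₀.mulVec x a - A₀.mulVec x a := by
    intro a
    have h := congrFun (congrArg (fun M : Matrix _ _ ℝ => M.mulVec x) hsubC) a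
    simpa [Matrix.sub_mulVec, Matrix.smul_mulVec, Matrix.one_mulVec, Pi.sub_apply,
      Pi.smul_apply, smul_eq_mul] using h
  have hDx : ∀ a, D.mulVec x a = B₀.mulVec x a - A₀.mulVec x a := by
    intro a
    rw [hDdef, Matrix.sub_mulVec]; simp [Pi.sub_apply]
  have hA₀x : ∀ a, (1 - t) * A₀.mulVec x a = t * D.mulVec x a - w a + rem a + ε * x a := by
    intro a
    have h1 := hCx a
    have h2 := hxid a
    have h3 := hDx a
    rw [hβdef] at h2
    have h3t : t * D.mulVec x a = t * B₀.mulVec x a - t * A₀.mulVec x a := by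
      rw [h3]; ring
    linarith [h1, h2, h3t]
  have hNx : ∀ a, (1 - t) * N.mulVec x a
      = t * x a - u₀ a + S.mulVec rem a + ε * S.mulVec x a := by
    intro a
    have hv1 : ((1 - t) • (A₀.mulVec x)) = (t • D.mulVec x - w + rem + ε • x) := by
      funext b
      simp only [Pi.smul_apply, Pi.sub_apply, Pi.add_apply, smul_eq_mul]
      linarith [hA₀x b]
    have h2 : S.mulVec ((1 - t) • (A₀.mulVec x)) a = (1 - t) * N.mulVec x a := by
      rw [Matrix.mulVec_smul, hNdef, ← Matrix.mulVec_mulVec]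
      simp [Pi.smul_apply, smul_eq_mul]
    have h3 : S.mulVec (t • D.mulVec x - w + rem + ε • x) a
        = t * x a - u₀ a + S.mulVec rem a + ε * S.mulVec x a := by
      rw [Matrix.mulVec_add, Matrix.mulVec_add, Matrix.mulVec_sub]
      rw [Matrix.mulVec_smul, Matrix.mulVec_smul]
      rw [Matrix.mulVec_mulVec, hSD, Matrix.one_mulVec, hSw]
      simp [Pi.add_apply, Pi.sub_apply, Pi.smul_apply, smul_eq_mul]
    rw [← h2, hv1, h3]
  -- final subinvariance bound
  have hfinal : ∀ a, N.mulVec x a ≤ ((t + δ) / (1 - t)) * x a := by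
    intro a
    have h1 := hNx a
    have h2 := hSrem a
    have h3 : ε * S.mulVec x a ≤ δ * x a := by
      have hpos : 0 < γ * κ0 := mul_pos hγpos hκ0pos
      have hchain : (γ * κ0) * (ε * S.mulVec x a) ≤ (γ * κ0) * (δ * x a) := by
        calc (γ * κ0) * (ε * S.mulVec x a) = (ε * κ0) * (γ * S.mulVec x a) := by ring
          _ ≤ (ε * κ0) * (xmax * u₀ a) :=
              mul_le_mul_of_nonneg_left (hSx a) (mul_nonneg hεpos.le hκ0pos.le)
          _ = (ε * u₀ a) * (κ0 * xmax) := by ring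
          _ ≤ (ε * u₀ a) * (pq * x a) :=
              mul_le_mul_of_nonneg_left (hxmaxle a) (mul_nonneg hεpos.le (hu₀ a).le)
          _ ≤ (ε * umax) * (pq * x a) := by
              refine mul_le_mul_of_nonneg_right ?_ (mul_nonneg hpqpos.le (hxpos a).le)
              exact mul_le_mul_of_nonneg_left (humax a) hεpos.le
          _ = (ε * (pq * umax)) * x a := by ring
          _ ≤ (δ * γ * κ0) * x a := mul_le_mul_of_nonneg_right hεle (hxpos a).le
          _ = (γ * κ0) * (δ * x a) := by ring
      exact le_of_mul_le_mul_left hchain hpos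
    have h1t : (0:ℝ) < 1 - t := by linarith
    rw [div_mul_eq_mul_div, le_div_iff₀ h1t]
    linarith [h1, h2, h3]
  have hspec : specRad N ≤ (t + δ) / (1 - t) :=
    Aux.specRad_le_of_subinv hNnn hxpos hfinal
  have hlt : (t + δ) / (1 - t) < μJ := by
    rw [div_lt_iff₀ (by linarith : (0:ℝ) < 1 - t)]
    nlinarith [hδsum, hδpos]
  linarith [hspec, hlt, hμJN.le, hμJN.ge]

/-- If `0 < t < ρ(A,B)` and `J` is a class of `G(tB − A)` with
`ρ(A,B) = μ_J/(1+μ_J)` where `μ_J = ρ((B_J − A_J)⁻¹A_J)` and `m = |J|`, then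
the index `s` with `tB − A ∈ L_s` satisfies `s ≤ n−1` if `m = n`, and `s < m`
if `m < n`. -/
theorem stmt_14 {n : ℕ} (A B : Matrix (Fin n) (Fin n) ℝ)
    (hc1 : ∀ i j, 0 ≤ A i j)
    (hc2 : ∀ i j, i ≠ j → B i j ≤ A i j)
    (hc3 : ∃ u : Fin n → ℝ, (∀ i, 0 < u i) ∧ ∀ i, 0 < (B - A).mulVec u i)
    (μ ρAB : ℝ) (hμ : μ = specRad ((B - A)⁻¹ * A)) (hρ : ρAB = μ / (1 + μ))
    (t : ℝ) (ht0 : 0 < t) (ht1 : t < ρAB)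
    (J : Finset (Fin n)) (hJ : IsClass (edgeRel (t • B - A)) J)
    (μJ : ℝ) (hμJ : μJ = specRad ((subm B J - subm A J)⁻¹ * subm A J))
    (hρJ : ρAB = μJ / (1 + μJ))
    (m s : ℕ) (hm : m = J.card) (hs : MemL s (t • B - A)) :
    (m = n → s ≤ n - 1) ∧ (m < n → s < m) := by
  classical
  obtain ⟨u, hu, hBAu⟩ := hc3
  obtain ⟨v, hv⟩ := hJ
  obtain ⟨q, P, hP, hXP, hcond⟩ := hs
  have hvJ : v ∈ J := (hv v).2 ⟨Relation.ReflTransGen.refl, Relation.ReflTransGen.refl⟩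
  haveI hne : Nonempty {i : Fin n // i ∈ J} := ⟨⟨v, hvJ⟩⟩
  have hm1 : 1 ≤ m := by
    rw [hm]; exact Finset.card_pos.2 ⟨v, hvJ⟩
  have hμJ0 : 0 ≤ μJ := by rw [hμJ]; exact Aux.specRad_nonneg _
  have h1μ : (0:ℝ) < 1 + μJ := by linarith
  have htμ : t * (1 + μJ) < μJ := by
    have h := ht1
    rw [hρJ] at h
    exact (lt_div_iff₀ h1μ).1 h
  have red : ∀ J' : Finset (Fin n), J ⊆ J' → specRad (subm P J') ≤ q → False := by
    intro J' hJJ' hPJ'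
    have hinj : Function.Injective (fun a : {i : Fin n // i ∈ J} =>
        (⟨a.1, hJJ' a.2⟩ : {i : Fin n // i ∈ J'})) := by
      intro a b hab
      have h2 := congrArg Subtype.val hab
      exact Subtype.ext h2
    have heq : subm P J = (subm P J').submatrix
        (fun a : {i : Fin n // i ∈ J} => (⟨a.1, hJJ' a.2⟩ : {i : Fin n // i ∈ J'}))
        (fun a : {i : Fin n // i ∈ J} => (⟨a.1, hJJ' a.2⟩ : {i : Fin n // i ∈ J'})) := rfl
    have hmono : specRad (subm P J) ≤ specRad (subm P J') := by
      rw [heq]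
      exact Aux.specRad_submatrix_le (fun a b => hP _ _) _ hinj
    exact key_contradiction hc1 hc2 hu hBAu ht0 hv hμJ htμ hP hXP (le_trans hmono hPJ')
  have hbdd : ∀ s' : ℕ, BddAbove {r : ℝ | ∃ J' : Finset (Fin n), J'.card = s' ∧
      r = specRad (subm P J')} := by
    intro s'
    have hsub : {r : ℝ | ∃ J' : Finset (Fin n), J'.card = s' ∧ r = specRad (subm P J')} ⊆
        (fun J' : Finset (Fin n) => specRad (subm P J')) '' Set.univ := by
      rintro r ⟨J', _, rfl⟩; exact ⟨J', Set.mem_univ _, rfl⟩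
    exact BddAbove.mono hsub ((Set.finite_univ.image _).bddAbove)
  have hmem : ∀ (s' : ℕ) (J' : Finset (Fin n)), J'.card = s' →
      specRad (subm P J') ≤ rhoS P s' :=
    fun s' J' hcard => le_csSup (hbdd s') ⟨J', hcard, rfl⟩
  have hempty : ∀ s', n < s' → rhoS P s' = 0 := by
    intro s' hs'
    have hemp : {r : ℝ | ∃ J' : Finset (Fin n), J'.card = s' ∧ r = specRad (subm P J')} = ∅ := by
      ext r
      simp only [Set.mem_setOf_eq, Set.mem_empty_iff_false, iff_false, not_exists]
      rintro J' ⟨hcard, _⟩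
      have hcle := Finset.card_le_univ J'
      rw [hcard, Fintype.card_fin] at hcle
      omega
    simp only [rhoS]
    rw [hemp, Real.sSup_empty]
  by_cases hs0 : s = 0
  · subst hs0
    exact ⟨fun _ => Nat.zero_le _, fun _ => hm1⟩
  rw [if_neg hs0] at hcond
  obtain ⟨hcq, hcs⟩ := hcond
  have hred2 : m ≤ s → False := by
    intro hms
    by_cases hsn : s ≤ n
    · obtain ⟨J', hJJ', _, hcard⟩ := Finset.exists_subsuperset_card_eq (n := s)
        (Finset.subset_univ J) (by rw [← hm]; exact hms)
        (by rw [Finset.card_univ, Fintype.card_fin]; exact hsn)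
      exact red J' hJJ' (le_trans (hmem s J' hcard) hcq)
    · push_neg at hsn
      have h0q : rhoS P s = 0 := hempty s hsn
      have hq0 : (0:ℝ) ≤ q := h0q ▸ hcq
      rcases hcs with h | h
      · omega
      · have h1 : rhoS P (s + 1) = 0 := hempty (s + 1) (by omega)
        rw [h1] at h
        linarith
  constructor
  · intro hmn
    by_contra hcon
    push_neg at hcon
    exact hred2 (by omega)
  · intro hmn
    by_contra hcon
    push_neg at hcon
    exact hred2 hcon
end
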